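/- arXiv:1907.05520 — 3 statements merged into one kernel-verified Lean document; each statement's English description precedes it below -/
import Mathlib

section
/- Let B ⊆ ℝ^n be a compact connected set, let ε, η > 0, and let D̄ = {x ∈ B : ‖∇g(x)‖₂ ≤ ε}. Assume (i) |λ_min(∇²g(x))| ≥ η for all x ∈ D̄; (ii) ‖∇f(x) − ∇g(x)‖₂ ≤ ε/2 for all x ∈ B; (iii) ‖∇²f(x) − ∇²g(x)‖₂ ≤ η/2 for all x ∈ B. Let D be a maximal connected compact subset of D̄ with C² boundary. If g has a strict saddle point in D, then every critical point x of f in D satisfies λ_min(∇²f(x)) ≤ −η/2; in particular, every saddle point of f in D is a strict saddle point. -/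
open Set
open scoped RealInnerProductSpace

/-- The smallest eigenvalue of a (self-adjoint) continuous linear operator on ℝ^n,
expressed as the infimum of the Rayleigh quotient over the unit sphere. -/
noncomputable def lambdaMin {n : ℕ}
    (A : EuclideanSpace ℝ (Fin n) →L[ℝ] EuclideanSpace ℝ (Fin n)) : ℝ :=
  sInf {r : ℝ | ∃ v : EuclideanSpace ℝ (Fin n), ‖v‖ = 1 ∧ r = ⟪v, A v⟫}

lemma lambdaMin_bddBelow {n : ℕ}
    (A : EuclideanSpace ℝ (Fin n) →L[ℝ] EuclideanSpace ℝ (Fin n)) :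
    BddBelow {r : ℝ | ∃ v : EuclideanSpace ℝ (Fin n), ‖v‖ = 1 ∧ r = ⟪v, A v⟫} := by
  refine ⟨-‖A‖, ?_⟩
  rintro r ⟨v, hv, rfl⟩
  have h1 : |⟪v, A v⟫| ≤ ‖v‖ * ‖A v‖ := abs_real_inner_le_norm v (A v)
  have h2 : ‖A v‖ ≤ ‖A‖ * ‖v‖ := A.le_opNorm v
  rw [hv, one_mul] at h1
  rw [hv, mul_one] at h2
  have := neg_abs_le (⟪v, A v⟫ : ℝ)
  linarith

lemma lambdaMin_le_add {n : ℕ} (hn : 0 < n)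
    (A C : EuclideanSpace ℝ (Fin n) →L[ℝ] EuclideanSpace ℝ (Fin n)) :
    lambdaMin A ≤ lambdaMin C + ‖A - C‖ := by
  have hne : ∃ v : EuclideanSpace ℝ (Fin n), ‖v‖ = 1 := by
    refine ⟨EuclideanSpace.single ⟨0, hn⟩ (1 : ℝ), ?_⟩
    simp [EuclideanSpace.norm_single]
  obtain ⟨v₀, hv₀⟩ := hne
  have hCnel : (({r : ℝ | ∃ v, ‖v‖ = 1 ∧ r = ⟪v, C v⟫}) :
      Set ℝ).Nonempty := ⟨_, v₀, hv₀, rfl⟩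
  have key : lambdaMin A - ‖A - C‖ ≤ lambdaMin C := by
    apply le_csInf hCnel
    rintro r ⟨v, hv, rfl⟩
    have hmem : (⟪v, A v⟫ : ℝ) ∈ {r : ℝ | ∃ v, ‖v‖ = 1 ∧ r = ⟪v, A v⟫} := ⟨v, hv, rfl⟩
    have hle : lambdaMin A ≤ ⟪v, A v⟫ := csInf_le (lambdaMin_bddBelow A) hmem
    have hdiff : (⟪v, A v⟫ : ℝ) - ⟪v, C v⟫ = ⟪v, (A - C) v⟫ := by
      rw [ContinuousLinearMap.sub_apply, inner_sub_right]
    have hbound : |(⟪v, (A - C) v⟫ : ℝ)| ≤ ‖A - C‖ := by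
      have h1 : |(⟪v, (A - C) v⟫ : ℝ)| ≤ ‖v‖ * ‖(A - C) v‖ := abs_real_inner_le_norm _ _
      have h2 : ‖(A - C) v‖ ≤ ‖A - C‖ * ‖v‖ := (A - C).le_opNorm v
      rw [hv] at h1 h2; linarith
    have := abs_le.1 hbound
    linarith [hle, hdiff ▸ this.1]
  linarith

lemma lambdaMin_lipschitz {n : ℕ} (hn : 0 < n) :
    LipschitzWith 1 (fun A : EuclideanSpace ℝ (Fin n) →L[ℝ] EuclideanSpace ℝ (Fin n) =>
      lambdaMin A) := by
  apply LipschitzWith.of_dist_le_mul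
  intro A C
  rw [Real.dist_eq, dist_eq_norm]
  simp only [NNReal.coe_one, one_mul]
  have h1 := lambdaMin_le_add hn A C
  have h2 := lambdaMin_le_add hn C A
  rw [abs_le]
  constructor
  · have : ‖C - A‖ = ‖A - C‖ := by rw [norm_sub_rev]
    linarith [this ▸ h2]
  · linarith

lemma lambdaMin_zero_dim (A : EuclideanSpace ℝ (Fin 0) →L[ℝ] EuclideanSpace ℝ (Fin 0)) :
    lambdaMin A = 0 := by
  have : {r : ℝ | ∃ v : EuclideanSpace ℝ (Fin 0), ‖v‖ = 1 ∧ r = ⟪v, A v⟫} = ∅ := by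
    ext r
    simp only [mem_setOf_eq, mem_empty_iff_false, iff_false, not_exists]
    rintro v ⟨hv, _⟩
    have : v = 0 := Subsingleton.elim v 0
    rw [this, norm_zero] at hv
    exact one_ne_zero hv.symm
  rw [lambdaMin, this, Real.sInf_empty]

theorem stmt_1 {n : ℕ} (f g : EuclideanSpace ℝ (Fin n) → ℝ)
    (hf : ContDiff ℝ 2 f) (hg : ContDiff ℝ 2 g)
    (B : Set (EuclideanSpace ℝ (Fin n))) (hBc : IsCompact B) (hBconn : IsConnected B)
    (ε η : ℝ) (hε : 0 < ε) (hη : 0 < η)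
    (Dbar : Set (EuclideanSpace ℝ (Fin n)))
    (hDbar : Dbar = {x ∈ B | ‖gradient g x‖ ≤ ε})
    (h1 : ∀ x ∈ Dbar, η ≤ |lambdaMin (fderiv ℝ (gradient g) x)|)
    (h2 : ∀ x ∈ B, ‖gradient f x - gradient g x‖ ≤ ε / 2)
    (h3 : ∀ x ∈ B, ‖fderiv ℝ (gradient f) x - fderiv ℝ (gradient g) x‖ ≤ η / 2)
    (D : Set (EuclideanSpace ℝ (Fin n))) (hDsub : D ⊆ Dbar)
    (hDconn : IsConnected D) (hDcomp : IsCompact D)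
    (hDmax : ∀ D' : Set (EuclideanSpace ℝ (Fin n)),
      D ⊆ D' → D' ⊆ Dbar → IsConnected D' → D' = D)
    (hsaddle : ∃ x ∈ D, gradient g x = 0 ∧ lambdaMin (fderiv ℝ (gradient g) x) < 0) :
    ∀ x ∈ D, gradient f x = 0 → lambdaMin (fderiv ℝ (gradient f) x) ≤ -η / 2 := by
  obtain ⟨x₀, hx₀D, _, hx₀neg⟩ := hsaddle
  rcases Nat.eq_zero_or_pos n with hn0 | hn
  · exfalso
    subst hn0
    rw [lambdaMin_zero_dim] at hx₀neg
    exact lt_irrefl 0 hx₀neg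
  -- gradient g is C¹, so fderiv of it is continuous
  have hgrad1 : ∀ (h : EuclideanSpace ℝ (Fin n) → ℝ), ContDiff ℝ 2 h →
      ContDiff ℝ 1 (gradient h) := by
    intro h hh
    have hfd : ContDiff ℝ 1 (fderiv ℝ h) := hh.fderiv_right (by norm_num)
    have : gradient h = fun x => (InnerProductSpace.toDual ℝ _).symm (fderiv ℝ h x) := rfl
    rw [this]
    exact ((InnerProductSpace.toDual ℝ _).symm.contDiff).comp hfd
  have hcontg : Continuous (fderiv ℝ (gradient g)) :=
    (hgrad1 g hg).continuous_fderiv one_ne_zero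
  set φ : EuclideanSpace ℝ (Fin n) → ℝ :=
    fun x => lambdaMin (fderiv ℝ (gradient g) x) with hφ
  have hφcont : Continuous φ := (lambdaMin_lipschitz hn).continuous.comp hcontg
  -- φ ≤ -η on D
  have hφneg : ∀ x ∈ D, φ x ≤ -η := by
    intro x hxD
    have habs := h1 x (hDsub hxD)
    have habs₀ := h1 x₀ (hDsub hx₀D)
    by_contra hcon
    push_neg at hcon
    have hxpos : η ≤ φ x := by
      rcases abs_cases (φ x) with ⟨he, _⟩ | ⟨he, _⟩
      · rw [he] at habs; exact habs
      · rw [he] at habs; linarith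
    have hx₀le : φ x₀ ≤ -η := by
      rcases abs_cases (φ x₀) with ⟨he, hp⟩ | ⟨he, _⟩
      · linarith [hx₀neg, habs₀, he ▸ habs₀]
      · rw [he] at habs₀; linarith
    have hiv := hDconn.isPreconnected.intermediate_value hx₀D hxD
      (hφcont.continuousOn)
    have h0mem : (0 : ℝ) ∈ Icc (φ x₀) (φ x) := ⟨by linarith, by linarith⟩
    obtain ⟨z, hzD, hz0⟩ := hiv h0mem
    have := h1 z (hDsub hzD)
    simp only [hφ] at hz0
    rw [hz0] at this
    simp at this
    linarith
  -- Conclusion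
  intro x hxD _
  have hxB : x ∈ B := by
    have := hDsub hxD
    rw [hDbar] at this
    exact this.1
  have hlip := lambdaMin_le_add hn (fderiv ℝ (gradient f) x) (fderiv ℝ (gradient g) x)
  have hd := h3 x hxB
  have hgneg := hφneg x hxD
  simp only [hφ] at hgneg
  linarith
end

section
/- Let E ⊆ ℝ^n be a connected compact set with C² boundary ∂E, and let f, g : A₀ → ℝ be C² functions on an open set A₀ ⊇ E. Assume (i) for all x ∈ ∂E and all t ∈ [0,1], t∇f(x) + (1−t)∇g(x) ≠ 0; (ii) ‖∇²f(x) − ∇²g(x)‖₂ ≤ η/2 for all x ∈ E; (iii) |λ_min(∇²g(x))| ≥ η for all x ∈ E, where η > 0. Then both f and g have at most finitely many local minima in E, and the number of local minima of f in E equals the number of local minima of g in E. -/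
open Set
open scoped RealInnerProductSpace

open Metric InnerProductSpace

section LambdaMin
variable {n : ℕ} (A B : EuclideanSpace ℝ (Fin n) →L[ℝ] EuclideanSpace ℝ (Fin n))

lemma rayleigh_bddBelow :
    BddBelow {r : ℝ | ∃ v : EuclideanSpace ℝ (Fin n), ‖v‖ = 1 ∧ r = ⟪v, A v⟫} := by
  refine ⟨-‖A‖, ?_⟩
  rintro r ⟨v, hv, rfl⟩
  have h1 : |⟪v, A v⟫| ≤ ‖v‖ * ‖A v‖ := abs_real_inner_le_norm _ _
  have h2 : ‖A v‖ ≤ ‖A‖ * ‖v‖ := A.le_opNorm v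
  rw [hv] at h1 h2
  have := abs_le.1 h1
  simp only [one_mul, mul_one] at h1 h2 this
  linarith [this.1]

lemma lambdaMin_le {v : EuclideanSpace ℝ (Fin n)} (hv : ‖v‖ = 1) :
    lambdaMin A ≤ ⟪v, A v⟫ :=
  csInf_le (rayleigh_bddBelow A) ⟨v, hv, rfl⟩

lemma exists_unit_vector (hn : 0 < n) : ∃ v : EuclideanSpace ℝ (Fin n), ‖v‖ = 1 := by
  refine ⟨EuclideanSpace.single ⟨0, hn⟩ (1:ℝ), ?_⟩
  rw [EuclideanSpace.norm_single]; norm_num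

lemma le_lambdaMin (hn : 0 < n) {c : ℝ}
    (h : ∀ v : EuclideanSpace ℝ (Fin n), ‖v‖ = 1 → c ≤ ⟪v, A v⟫) : c ≤ lambdaMin A := by
  obtain ⟨v, hv⟩ := exists_unit_vector hn
  refine le_csInf ⟨_, ⟨v, hv, rfl⟩⟩ ?_
  rintro r ⟨w, hw, rfl⟩
  exact h w hw

lemma exists_rayleigh_lt (hn : 0 < n) {r : ℝ} (h : lambdaMin A < r) :
    ∃ v : EuclideanSpace ℝ (Fin n), ‖v‖ = 1 ∧ ⟪v, A v⟫ < r := by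
  obtain ⟨v, hv⟩ := exists_unit_vector hn
  have hne : {r : ℝ | ∃ w : EuclideanSpace ℝ (Fin n), ‖w‖ = 1 ∧ r = ⟪w, A w⟫}.Nonempty :=
    ⟨_, ⟨v, hv, rfl⟩⟩
  obtain ⟨s, ⟨w, hw, rfl⟩, hs⟩ := exists_lt_of_csInf_lt hne h
  exact ⟨w, hw, hs⟩

lemma rayleigh_scaled {c : ℝ} (hc : 0 ≤ c)
    (h : ∀ v : EuclideanSpace ℝ (Fin n), ‖v‖ = 1 → c ≤ ⟪v, A v⟫)
    (v : EuclideanSpace ℝ (Fin n)) : c * ‖v‖ ^ 2 ≤ ⟪v, A v⟫ := by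
  rcases eq_or_ne v 0 with rfl | hv
  · simp
  · have hnv : (0:ℝ) < ‖v‖ := norm_pos_iff.2 hv
    have hu : ‖(‖v‖⁻¹ • v : EuclideanSpace ℝ (Fin n))‖ = 1 := by
      rw [norm_smul, norm_inv, norm_norm, inv_mul_cancel₀ hnv.ne']
    have := h _ hu
    rw [map_smul, real_inner_smul_left, real_inner_smul_right] at this
    have h2 : c ≤ ‖v‖⁻¹ * (‖v‖⁻¹ * ⟪v, A v⟫) := this
    have h3 := mul_le_mul_of_nonneg_left h2 (le_of_lt (by positivity : (0:ℝ) < ‖v‖ ^ 2))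
    calc c * ‖v‖ ^ 2 = ‖v‖ ^ 2 * c := by ring
    _ ≤ ‖v‖ ^ 2 * (‖v‖⁻¹ * (‖v‖⁻¹ * ⟪v, A v⟫)) := h3
    _ = ⟪v, A v⟫ := by field_simp

lemma rayleigh_perturb (v : EuclideanSpace ℝ (Fin n)) :
    |⟪v, A v⟫ - ⟪v, B v⟫| ≤ ‖A - B‖ * ‖v‖ ^ 2 := by
  have h0 : ⟪v, A v⟫ - ⟪v, B v⟫ = ⟪v, (A - B) v⟫ := by
    rw [ContinuousLinearMap.sub_apply, inner_sub_right]
  rw [h0]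
  have h1 : |⟪v, (A - B) v⟫| ≤ ‖v‖ * ‖(A - B) v‖ := abs_real_inner_le_norm _ _
  have h2 : ‖(A - B) v‖ ≤ ‖A - B‖ * ‖v‖ := (A - B).le_opNorm v
  nlinarith [norm_nonneg v, norm_nonneg (A - B)]

section Abstract
variable {n : ℕ}

lemma hasDerivAt_inner_line {G : EuclideanSpace ℝ (Fin n) → EuclideanSpace ℝ (Fin n)}
    {H : EuclideanSpace ℝ (Fin n) →L[ℝ] EuclideanSpace ℝ (Fin n)}
    (x u : EuclideanSpace ℝ (Fin n)) (s : ℝ) (hD : HasFDerivAt G H (x + s • u)) :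
    HasDerivAt (fun s : ℝ => ⟪u, G (x + s • u)⟫) ⟪u, H u⟫ s := by
  have hline : HasDerivAt (fun s : ℝ => x + s • u) u s := by
    simpa using ((hasDerivAt_id s).smul_const u).const_add x
  have h1 : HasDerivAt (fun s : ℝ => G (x + s • u)) (H u) s := hD.comp_hasDerivAt s hline
  have h2 := (innerSL ℝ u).hasFDerivAt.comp_hasDerivAt s h1
  simpa [Function.comp_def] using h2

lemma hasDerivAt_phi_line {φ : EuclideanSpace ℝ (Fin n) → ℝ}
    {G : EuclideanSpace ℝ (Fin n) → EuclideanSpace ℝ (Fin n)}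
    (x u : EuclideanSpace ℝ (Fin n)) (s : ℝ)
    (hG : HasGradientAt φ (G (x + s • u)) (x + s • u)) :
    HasDerivAt (fun s : ℝ => φ (x + s • u)) ⟪G (x + s • u), u⟫ s := by
  have hline : HasDerivAt (fun s : ℝ => x + s • u) u s := by
    simpa using ((hasDerivAt_id s).smul_const u).const_add x
  have h1 := hG.hasFDerivAt.comp_hasDerivAt s hline
  simpa [InnerProductSpace.toDual_apply_apply, Function.comp_def] using h1

lemma seg_mem_of_convex {U : Set (EuclideanSpace ℝ (Fin n))} (hU : Convex ℝ U)
    {x y : EuclideanSpace ℝ (Fin n)} (hx : x ∈ U) (hy : y ∈ U) {s : ℝ}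
    (hs : s ∈ Icc (0:ℝ) 1) : x + s • (y - x) ∈ U :=
  hU.add_smul_sub_mem hx hy hs

lemma strong_mono {G : EuclideanSpace ℝ (Fin n) → EuclideanSpace ℝ (Fin n)}
    {H : EuclideanSpace ℝ (Fin n) → EuclideanSpace ℝ (Fin n) →L[ℝ] EuclideanSpace ℝ (Fin n)}
    {U : Set (EuclideanSpace ℝ (Fin n))} (hU : Convex ℝ U)
    (hD : ∀ z ∈ U, HasFDerivAt G (H z) z)
    {c : ℝ} (hpos : ∀ z ∈ U, ∀ v, c * ‖v‖ ^ 2 ≤ ⟪v, H z v⟫)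
    {x y : EuclideanSpace ℝ (Fin n)} (hx : x ∈ U) (hy : y ∈ U) :
    c * ‖y - x‖ ^ 2 ≤ ⟪y - x, G y - G x⟫ := by
  set u := y - x with hu
  have hseg : ∀ s ∈ Icc (0:ℝ) 1, x + s • u ∈ U := fun s hs => seg_mem_of_convex hU hx hy hs
  set q : ℝ → ℝ := fun s => ⟪u, G (x + s • u)⟫ - s * (c * ‖u‖ ^ 2) with hq
  have hder : ∀ s ∈ Icc (0:ℝ) 1,
      HasDerivAt q (⟪u, H (x + s • u) u⟫ - c * ‖u‖ ^ 2) s := by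
    intro s hs
    have h1 := hasDerivAt_inner_line x u s (hD _ (hseg s hs))
    have h2 : HasDerivAt (fun s : ℝ => s * (c * ‖u‖ ^ 2)) (c * ‖u‖ ^ 2) s := by
      simpa using (hasDerivAt_id s).mul_const (c * ‖u‖ ^ 2)
    exact h1.sub h2
  have hmono : MonotoneOn q (Icc 0 1) := by
    apply monotoneOn_of_deriv_nonneg (convex_Icc 0 1)
    · exact fun s hs => (hder s hs).continuousAt.continuousWithinAt
    · intro s hs
      rw [interior_Icc] at hs
      exact (hder s (Ioo_subset_Icc_self hs)).differentiableAt.differentiableWithinAt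
    · intro s hs
      rw [interior_Icc] at hs
      rw [(hder s (Ioo_subset_Icc_self hs)).deriv]
      have := hpos _ (hseg s (Ioo_subset_Icc_self hs)) u
      linarith
  have h01 := hmono (left_mem_Icc.2 zero_le_one) (right_mem_Icc.2 zero_le_one) zero_le_one
  have hq0 : q 0 = ⟪u, G x⟫ := by simp [hq]
  have hq1 : q 1 = ⟪u, G y⟫ - c * ‖u‖ ^ 2 := by
    have h : x + u = y := by simp [hu]
    simp [hq, h]
  rw [hq0, hq1] at h01
  have hsub : ⟪u, G y - G x⟫ = ⟪u, G y⟫ - ⟪u, G x⟫ := inner_sub_right _ _ _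
  rw [show ⟪y - x, G y - G x⟫ = ⟪u, G y - G x⟫ from rfl, hsub]
  linarith

lemma isMinOn_of_gradient_zero {φ : EuclideanSpace ℝ (Fin n) → ℝ}
    {G : EuclideanSpace ℝ (Fin n) → EuclideanSpace ℝ (Fin n)}
    {H : EuclideanSpace ℝ (Fin n) → EuclideanSpace ℝ (Fin n) →L[ℝ] EuclideanSpace ℝ (Fin n)}
    {U : Set (EuclideanSpace ℝ (Fin n))} (hU : Convex ℝ U)
    (hGrad : ∀ z ∈ U, HasGradientAt φ (G z) z)
    (hD : ∀ z ∈ U, HasFDerivAt G (H z) z)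
    {c : ℝ} (hc : 0 ≤ c) (hpos : ∀ z ∈ U, ∀ v, c * ‖v‖ ^ 2 ≤ ⟪v, H z v⟫)
    {x : EuclideanSpace ℝ (Fin n)} (hx : x ∈ U) (hx0 : G x = 0) :
    ∀ y ∈ U, φ x ≤ φ y := by
  intro y hy
  set u := y - x with hu
  have hseg : ∀ s ∈ Icc (0:ℝ) 1, x + s • u ∈ U := fun s hs => seg_mem_of_convex hU hx hy hs
  have hder : ∀ s ∈ Icc (0:ℝ) 1,
      HasDerivAt (fun s : ℝ => φ (x + s • u)) ⟪G (x + s • u), u⟫ s :=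
    fun s hs => hasDerivAt_phi_line x u s (hGrad _ (hseg s hs))
  have hmono : MonotoneOn (fun s : ℝ => φ (x + s • u)) (Icc 0 1) := by
    apply monotoneOn_of_deriv_nonneg (convex_Icc 0 1)
    · exact fun s hs => (hder s hs).continuousAt.continuousWithinAt
    · intro s hs
      rw [interior_Icc] at hs
      exact (hder s (Ioo_subset_Icc_self hs)).differentiableAt.differentiableWithinAt
    · intro s hs
      rw [interior_Icc] at hs
      rw [(hder s (Ioo_subset_Icc_self hs)).deriv]
      have hsm := strong_mono hU hD hpos hx (hseg s (Ioo_subset_Icc_self hs))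
      have heq : x + s • u - x = s • u := by abel
      rw [heq, hx0, sub_zero] at hsm
      have h1 : c * ‖s • u‖ ^ 2 ≤ s * ⟪u, G (x + s • u)⟫ := by
        rwa [real_inner_smul_left] at hsm
      have h2 : 0 ≤ c * ‖s • u‖ ^ 2 := by positivity
      have h3 : 0 ≤ s * ⟪u, G (x + s • u)⟫ := le_trans h2 h1
      have h4 : 0 ≤ ⟪u, G (x + s • u)⟫ := by nlinarith [hs.1, h3]
      rwa [real_inner_comm]
  have h01 := hmono (left_mem_Icc.2 zero_le_one) (right_mem_Icc.2 zero_le_one) zero_le_one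
  simpa [hu] using h01

end Abstract

section Abstract2
variable {n : ℕ}

lemma exists_gradient_zero {φ : EuclideanSpace ℝ (Fin n) → ℝ}
    {G : EuclideanSpace ℝ (Fin n) → EuclideanSpace ℝ (Fin n)}
    {H : EuclideanSpace ℝ (Fin n) → EuclideanSpace ℝ (Fin n) →L[ℝ] EuclideanSpace ℝ (Fin n)}
    {U : Set (EuclideanSpace ℝ (Fin n))} (hU : Convex ℝ U)
    (hGrad : ∀ z ∈ U, HasGradientAt φ (G z) z)
    (hD : ∀ z ∈ U, HasFDerivAt G (H z) z)
    (hGcont : ContinuousOn G U)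
    {c : ℝ} (hc : 0 < c) (hpos : ∀ z ∈ U, ∀ v, c * ‖v‖ ^ 2 ≤ ⟪v, H z v⟫)
    {x₀ : EuclideanSpace ℝ (Fin n)} {r : ℝ} (hr : 0 < r)
    (hball : closedBall x₀ r ⊆ U) (hsmall : ‖G x₀‖ < c * r) :
    ∃ z, dist z x₀ < r ∧ G z = 0 := by
  have hcomp : IsCompact (closedBall x₀ r) := isCompact_closedBall x₀ r
  have hne : (closedBall x₀ r).Nonempty := ⟨x₀, mem_closedBall_self hr.le⟩
  have hcont : ContinuousOn φ (closedBall x₀ r) := fun z hz =>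
    (hGrad z (hball hz)).hasFDerivAt.differentiableAt.continuousAt.continuousWithinAt
  obtain ⟨z, hz, hmin⟩ := hcomp.exists_isMinOn hne hcont
  have hzr : dist z x₀ ≤ r := mem_closedBall.1 hz
  by_cases hlt : dist z x₀ < r
  · refine ⟨z, hlt, ?_⟩
    have hnb : closedBall x₀ r ∈ nhds z :=
      mem_nhds_iff.2 ⟨ball x₀ r, ball_subset_closedBall, isOpen_ball, mem_ball.2 hlt⟩
    have hloc : IsLocalMin φ z := hmin.isLocalMin hnb
    have hfz := hloc.fderiv_eq_zero
    have hF : HasFDerivAt φ (InnerProductSpace.toDual ℝ _ (G z)) z :=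
      (hGrad z (hball hz)).hasFDerivAt
    have h0 : InnerProductSpace.toDual ℝ _ (G z) = 0 := by rw [← hF.fderiv]; exact hfz
    exact (LinearIsometryEquiv.map_eq_zero_iff _).1 h0
  · exfalso
    have heq : dist z x₀ = r := le_antisymm hzr (not_lt.1 hlt)
    set u := z - x₀ with hu
    have hnu : ‖u‖ = r := by rw [hu, ← dist_eq_norm]; exact heq
    have hseg : ∀ s ∈ Icc (0:ℝ) 1, x₀ + s • u ∈ closedBall x₀ r := by
      intro s hs
      rw [mem_closedBall, dist_eq_norm, add_sub_cancel_left, norm_smul,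
        Real.norm_eq_abs, abs_of_nonneg hs.1, hnu]
      nlinarith [hs.1, hs.2, hr]
    set w : ℝ → ℝ := fun s => ⟪u, G (x₀ + s • u)⟫ with hw
    have hx₀U : x₀ ∈ U := hball (mem_closedBall_self hr.le)
    have hzU : z ∈ U := hball hz
    have hw1 : 0 < w 1 := by
      have hsm := strong_mono hU hD hpos hx₀U hzU
      have hiB : |⟪u, G x₀⟫| ≤ ‖u‖ * ‖G x₀‖ := abs_real_inner_le_norm _ _
      have hsub : ⟪u, G z - G x₀⟫ = ⟪u, G z⟫ - ⟪u, G x₀⟫ := inner_sub_right _ _ _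
      have h1 : x₀ + (1:ℝ) • u = z := by simp [hu]
      have habs := abs_le.1 hiB
      simp only [hw, h1]
      rw [show (z - x₀ : EuclideanSpace ℝ (Fin n)) = u from rfl, hsub] at hsm
      rw [hnu] at hiB habs hsm
      nlinarith [habs.1, hsm, hr, hsmall]
    have hwcont : ContinuousOn w (Icc (0:ℝ) 1) := by
      apply ContinuousOn.inner continuousOn_const
      apply hGcont.comp
      · exact (continuous_const.add (continuous_id.smul continuous_const)).continuousOn
      · exact fun s hs => hball (hseg s hs)
    have hcw : ContinuousWithinAt w (Icc (0:ℝ) 1) 1 :=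
      hwcont 1 (right_mem_Icc.2 zero_le_one)
    have hpre : w ⁻¹' (Ioi 0) ∈ nhdsWithin 1 (Icc (0:ℝ) 1) := hcw (Ioi_mem_nhds hw1)
    obtain ⟨ε, hε, hεsub⟩ := Metric.mem_nhdsWithin_iff.1 hpre
    set s₁ : ℝ := max 0 (1 - ε / 2) with hs₁def
    have hs₁0 : 0 ≤ s₁ := le_max_left _ _
    have hs₁1 : s₁ < 1 := by
      rw [hs₁def, max_lt_iff]; constructor <;> nlinarith
    have hwpos : ∀ s ∈ Icc s₁ 1, 0 < w s := by
      intro s hs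
      have hs01 : s ∈ Icc (0:ℝ) 1 := ⟨le_trans hs₁0 hs.1, hs.2⟩
      apply hεsub
      constructor
      · rw [mem_ball, Real.dist_eq, abs_of_nonpos (by linarith [hs.2])]
        have : 1 - ε / 2 ≤ s₁ := le_max_right _ _
        linarith [hs.1]
      · exact hs01
    have hder : ∀ s ∈ Icc s₁ 1,
        HasDerivAt (fun s : ℝ => φ (x₀ + s • u)) ⟪G (x₀ + s • u), u⟫ s := by
      intro s hs
      have hs01 : s ∈ Icc (0:ℝ) 1 := ⟨le_trans hs₁0 hs.1, hs.2⟩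
      exact hasDerivAt_phi_line x₀ u s (hGrad _ (hball (hseg s hs01)))
    have hmono : StrictMonoOn (fun s : ℝ => φ (x₀ + s • u)) (Icc s₁ 1) := by
      apply strictMonoOn_of_deriv_pos (convex_Icc s₁ 1)
      · exact fun s hs => (hder s hs).continuousAt.continuousWithinAt
      · intro s hs
        rw [interior_Icc] at hs
        have hs' : s ∈ Icc s₁ 1 := Ioo_subset_Icc_self hs
        rw [(hder s hs').deriv, real_inner_comm]
        exact hwpos s hs'
    have hlt2 : φ (x₀ + s₁ • u) < φ (x₀ + (1:ℝ) • u) :=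
      hmono (left_mem_Icc.2 hs₁1.le) (right_mem_Icc.2 hs₁1.le) hs₁1
    have h1 : x₀ + (1:ℝ) • u = z := by simp [hu]
    rw [h1] at hlt2
    exact absurd (hmin (hseg s₁ ⟨hs₁0, hs₁1.le⟩)) (not_le.2 hlt2)

lemma not_isLocalMin_of_neg_rayleigh {φ : EuclideanSpace ℝ (Fin n) → ℝ}
    {G : EuclideanSpace ℝ (Fin n) → EuclideanSpace ℝ (Fin n)}
    {H : EuclideanSpace ℝ (Fin n) →L[ℝ] EuclideanSpace ℝ (Fin n)}
    {x v : EuclideanSpace ℝ (Fin n)}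
    (hGrad : ∀ᶠ y in nhds x, HasGradientAt φ (G y) y)
    (hD : HasFDerivAt G H x)
    (hneg : ⟪v, H v⟫ < 0)
    (hmin : IsLocalMin φ x) : False := by
  have hGx : HasGradientAt φ (G x) x := hGrad.self_of_nhds
  -- G x = 0
  have hfz := hmin.fderiv_eq_zero
  have h0 : InnerProductSpace.toDual ℝ _ (G x) = 0 := by
    rw [← hGx.hasFDerivAt.fderiv]; exact hfz
  have hGx0 : G x = 0 := (LinearIsometryEquiv.map_eq_zero_iff _).1 h0
  set a : ℝ := ⟪v, H v⟫ with ha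
  set q : ℝ → ℝ := fun s => ⟪v, G (x + s • v)⟫ with hq
  have hq0 : HasDerivAt q a 0 := by
    have := hasDerivAt_inner_line x v 0 (by simpa using hD)
    simpa using this
  have hqzero : q 0 = 0 := by simp [hq, hGx0]
  -- get δ with q s < a*s/2 < 0 for 0 < s < δ
  have hslope : Filter.Tendsto (slope q 0) (nhdsWithin 0 {(0:ℝ)}ᶜ) (nhds a) :=
    hasDerivAt_iff_tendsto_slope.1 hq0
  have hIio : Iio (a / 2) ∈ nhds a := Iio_mem_nhds (by linarith)
  have hev : ∀ᶠ s in nhdsWithin 0 {(0:ℝ)}ᶜ, slope q 0 s < a / 2 := hslope hIio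
  obtain ⟨δ, hδ, hδsub⟩ := Metric.mem_nhdsWithin_iff.1 hev
  have hqneg : ∀ s : ℝ, 0 < s → s < δ → q s < a * s / 2 := by
    intro s hs hsδ
    have hmem : s ∈ ball (0:ℝ) δ ∩ {(0:ℝ)}ᶜ := by
      constructor
      · rw [mem_ball, Real.dist_eq, sub_zero, abs_of_pos hs]; exact hsδ
      · exact fun h => hs.ne' h
    have := hδsub hmem
    rw [mem_setOf_eq, slope_def_field] at this
    have h2 : (q s - q 0) / (s - 0) < a / 2 := this
    rw [hqzero, sub_zero, sub_zero, div_lt_iff₀ hs] at h2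
    linarith [h2]
  -- neighborhood where gradient rep and local min hold
  obtain ⟨ε₂, hε₂, hG2⟩ := Metric.eventually_nhds_iff.1 hGrad
  obtain ⟨ε₃, hε₃, hm3⟩ := Metric.eventually_nhds_iff.1 hmin
  obtain ⟨σ, hσpos, hσδ, hσ2, hσ3⟩ :
      ∃ σ : ℝ, 0 < σ ∧ σ < δ ∧ σ * ‖v‖ < ε₂ ∧ σ * ‖v‖ < ε₃ := by
    have hε : 0 < min ε₂ ε₃ := lt_min hε₂ hε₃
    obtain ⟨σ₀, hσ₀pos, hσ₀⟩ := exists_pos_mul_lt hε ‖v‖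
    refine ⟨min σ₀ (δ / 2), lt_min hσ₀pos (by linarith), ?_, ?_, ?_⟩
    · exact lt_of_le_of_lt (min_le_right _ _) (by linarith)
    · have h2 : min σ₀ (δ / 2) * ‖v‖ ≤ σ₀ * ‖v‖ :=
        mul_le_mul_of_nonneg_right (min_le_left _ _) (norm_nonneg v)
      have h3 : σ₀ * ‖v‖ < min ε₂ ε₃ := by rw [mul_comm]; exact hσ₀
      exact lt_of_le_of_lt h2 (lt_of_lt_of_le h3 (min_le_left _ _))
    · have h2 : min σ₀ (δ / 2) * ‖v‖ ≤ σ₀ * ‖v‖ :=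
        mul_le_mul_of_nonneg_right (min_le_left _ _) (norm_nonneg v)
      have h3 : σ₀ * ‖v‖ < min ε₂ ε₃ := by rw [mul_comm]; exact hσ₀
      exact lt_of_le_of_lt h2 (lt_of_lt_of_le h3 (min_le_right _ _))
  have hdist : ∀ s : ℝ, 0 ≤ s → s ≤ σ → dist (x + s • v) x < ε₂ ∧ dist (x + s • v) x < ε₃ := by
    intro s h0s hsσ
    have : dist (x + s • v) x = s * ‖v‖ := by
      rw [dist_eq_norm, add_sub_cancel_left, norm_smul, Real.norm_eq_abs, abs_of_nonneg h0s]
    rw [this]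
    have hle : s * ‖v‖ ≤ σ * ‖v‖ := mul_le_mul_of_nonneg_right hsσ (norm_nonneg v)
    exact ⟨lt_of_le_of_lt hle hσ2, lt_of_le_of_lt hle hσ3⟩
  -- ψ strictly decreasing on [0, σ]
  have hder : ∀ s ∈ Icc (0:ℝ) σ,
      HasDerivAt (fun s : ℝ => φ (x + s • v)) ⟪G (x + s • v), v⟫ s := by
    intro s hs
    exact hasDerivAt_phi_line x v s (hG2 (hdist s hs.1 hs.2).1)
  have hanti : StrictAntiOn (fun s : ℝ => φ (x + s • v)) (Icc 0 σ) := by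
    apply strictAntiOn_of_deriv_neg (convex_Icc 0 σ)
    · exact fun s hs => (hder s hs).continuousAt.continuousWithinAt
    · intro s hs
      rw [interior_Icc] at hs
      rw [(hder s (Ioo_subset_Icc_self hs)).deriv, real_inner_comm]
      have hqs := hqneg s hs.1 (lt_trans hs.2 hσδ)
      have : a * s / 2 < 0 := by nlinarith [hs.1]
      calc ⟪v, G (x + s • v)⟫ = q s := rfl
      _ < 0 := by linarith
  have hlt : φ (x + σ • v) < φ (x + (0:ℝ) • v) :=
    hanti (left_mem_Icc.2 hσpos.le) (right_mem_Icc.2 hσpos.le) hσpos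
  have h0 : x + (0:ℝ) • v = x := by simp
  rw [h0] at hlt
  exact absurd (hm3 (hdist σ hσpos.le le_rfl).2) (not_le.2 hlt)

end Abstract2

section Plumbing
variable {n : ℕ} {A₀ : Set (EuclideanSpace ℝ (Fin n))}
  {f g : EuclideanSpace ℝ (Fin n) → ℝ}

lemma gradient_contDiffOn (hA₀ : IsOpen A₀) (hf : ContDiffOn ℝ 2 f A₀) :
    ContDiffOn ℝ 1 (gradient f) A₀ := by
  have h1 : ContDiffOn ℝ 1 (fderiv ℝ f) A₀ := hf.fderiv_of_isOpen hA₀ (by norm_num)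
  have h2 : gradient f = fun x => (toDual ℝ (EuclideanSpace ℝ (Fin n))).symm (fderiv ℝ f x) :=
    rfl
  rw [h2]
  exact (toDual ℝ (EuclideanSpace ℝ (Fin n))).symm.contDiff.comp_contDiffOn h1

lemma gradient_differentiableAt (hA₀ : IsOpen A₀) (hf : ContDiffOn ℝ 2 f A₀)
    {x : EuclideanSpace ℝ (Fin n)} (hx : x ∈ A₀) :
    DifferentiableAt ℝ (gradient f) x :=
  ((gradient_contDiffOn hA₀ hf).differentiableOn one_ne_zero).differentiableAt (hA₀.mem_nhds hx)

lemma hasFDerivAt_gradient (hA₀ : IsOpen A₀) (hf : ContDiffOn ℝ 2 f A₀)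
    {x : EuclideanSpace ℝ (Fin n)} (hx : x ∈ A₀) :
    HasFDerivAt (gradient f) (fderiv ℝ (gradient f) x) x :=
  (gradient_differentiableAt hA₀ hf hx).hasFDerivAt

lemma hessian_continuousOn (hA₀ : IsOpen A₀) (hf : ContDiffOn ℝ 2 f A₀) :
    ContinuousOn (fderiv ℝ (gradient f)) A₀ :=
  (gradient_contDiffOn hA₀ hf).continuousOn_fderiv_of_isOpen hA₀ le_rfl

lemma gradient_continuousOn (hA₀ : IsOpen A₀) (hf : ContDiffOn ℝ 2 f A₀) :
    ContinuousOn (gradient f) A₀ :=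
  (gradient_contDiffOn hA₀ hf).continuousOn

lemma hasGradientAt_of_mem (hA₀ : IsOpen A₀) (hf : ContDiffOn ℝ 2 f A₀)
    {x : EuclideanSpace ℝ (Fin n)} (hx : x ∈ A₀) :
    HasGradientAt f (gradient f x) x := by
  have : DifferentiableAt ℝ f x :=
    ((hf.differentiableOn (by norm_num)).differentiableAt (hA₀.mem_nhds hx))
  exact this.hasGradientAt

lemma hasGradientAt_combo (hA₀ : IsOpen A₀) (hf : ContDiffOn ℝ 2 f A₀)
    (hg : ContDiffOn ℝ 2 g A₀) (t : ℝ)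
    {x : EuclideanSpace ℝ (Fin n)} (hx : x ∈ A₀) :
    HasGradientAt (fun z => t * f z + (1 - t) * g z)
      (t • gradient f x + (1 - t) • gradient g x) x := by
  have hFf := (hasGradientAt_of_mem hA₀ hf hx).hasFDerivAt
  have hFg := (hasGradientAt_of_mem hA₀ hg hx).hasFDerivAt
  have hsum := (hFf.const_mul t).add (hFg.const_mul (1 - t))
  rw [hasGradientAt_iff_hasFDerivAt]
  convert hsum using 1
  · rfl
  · rfl
  · rfl
  · simp [map_add, map_smul]

lemma hasFDerivAt_comboG (hA₀ : IsOpen A₀) (hf : ContDiffOn ℝ 2 f A₀)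
    (hg : ContDiffOn ℝ 2 g A₀) (t : ℝ)
    {x : EuclideanSpace ℝ (Fin n)} (hx : x ∈ A₀) :
    HasFDerivAt (fun z => t • gradient f z + (1 - t) • gradient g z)
      (t • fderiv ℝ (gradient f) x + (1 - t) • fderiv ℝ (gradient g) x) x :=
  ((hasFDerivAt_gradient hA₀ hf hx).const_smul t).add
    ((hasFDerivAt_gradient hA₀ hg hx).const_smul (1 - t))

lemma continuousOn_comboG (hA₀ : IsOpen A₀) (hf : ContDiffOn ℝ 2 f A₀)
    (hg : ContDiffOn ℝ 2 g A₀) (t : ℝ) :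
    ContinuousOn (fun z => t • gradient f z + (1 - t) • gradient g z) A₀ :=
  ((gradient_continuousOn hA₀ hf).const_smul t).add
    ((gradient_continuousOn hA₀ hg).const_smul (1 - t))

lemma rayleigh_combo {A B : EuclideanSpace ℝ (Fin n) →L[ℝ] EuclideanSpace ℝ (Fin n)}
    {c : ℝ} {t : ℝ} (ht : t ∈ Icc (0:ℝ) 1) (v : EuclideanSpace ℝ (Fin n))
    (hA : c * ‖v‖ ^ 2 ≤ ⟪v, A v⟫) (hB : c * ‖v‖ ^ 2 ≤ ⟪v, B v⟫) :
    c * ‖v‖ ^ 2 ≤ ⟪v, (t • A + (1 - t) • B) v⟫ := by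
  have h0 : (t • A + (1 - t) • B) v = t • (A v) + (1 - t) • (B v) := by
    simp [ContinuousLinearMap.add_apply, ContinuousLinearMap.smul_apply]
  have h : ⟪v, (t • A + (1 - t) • B) v⟫ = t * ⟪v, A v⟫ + (1 - t) * ⟪v, B v⟫ := by
    rw [h0, inner_add_right, real_inner_smul_right, real_inner_smul_right]
  rw [h]
  nlinarith [ht.1, ht.2]

lemma comboG_sub (t t' : ℝ) (x : EuclideanSpace ℝ (Fin n)) :
    (t • gradient f x + (1 - t) • gradient g x)
      - (t' • gradient f x + (1 - t') • gradient g x)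
      = (t - t') • (gradient f x - gradient g x) := by
  module

end Plumbing

section Main
variable {n : ℕ} {A₀ E : Set (EuclideanSpace ℝ (Fin n))}
  {f g : EuclideanSpace ℝ (Fin n) → ℝ} {η : ℝ}

lemma coverB (hA₀ : IsOpen A₀) (hEsub : E ⊆ A₀) (hEcomp : IsCompact E) (hEne : E.Nonempty)
    (hf : ContDiffOn ℝ 2 f A₀) (hg : ContDiffOn ℝ 2 g A₀) (hη : 0 < η)
    (hRayf : ∀ x ∈ E, ∀ v, η / 2 * ‖v‖ ^ 2 ≤ ⟪v, fderiv ℝ (gradient f) x v⟫)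
    (hRayg : ∀ x ∈ E, ∀ v, η * ‖v‖ ^ 2 ≤ ⟪v, fderiv ℝ (gradient g) x v⟫) :
    ∃ δ > 0, ∀ y ∈ E, ∃ U, IsOpen U ∧ Convex ℝ U ∧ U ⊆ A₀ ∧ ball y δ ⊆ U ∧
      ∀ z ∈ U, ∀ v, η / 4 * ‖v‖ ^ 2 ≤ ⟪v, fderiv ℝ (gradient f) z v⟫ ∧
        η / 4 * ‖v‖ ^ 2 ≤ ⟪v, fderiv ℝ (gradient g) z v⟫ := by
  have hrad : ∀ x ∈ E, ∃ r > 0, ball x (2 * r) ⊆ A₀ ∧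
      ∀ y ∈ ball x (2 * r), ‖fderiv ℝ (gradient f) y - fderiv ℝ (gradient f) x‖ < η / 8 ∧
        ‖fderiv ℝ (gradient g) y - fderiv ℝ (gradient g) x‖ < η / 8 := by
    intro x hx
    have hxA := hEsub hx
    have hcf : ContinuousAt (fderiv ℝ (gradient f)) x :=
      (hessian_continuousOn hA₀ hf).continuousAt (hA₀.mem_nhds hxA)
    have hcg : ContinuousAt (fderiv ℝ (gradient g)) x :=
      (hessian_continuousOn hA₀ hg).continuousAt (hA₀.mem_nhds hxA)
    obtain ⟨r1, hr1, hb1⟩ := Metric.continuousAt_iff.1 hcf (η / 8) (by linarith)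
    obtain ⟨r2, hr2, hb2⟩ := Metric.continuousAt_iff.1 hcg (η / 8) (by linarith)
    obtain ⟨r3, hr3, hb3⟩ := Metric.isOpen_iff.1 hA₀ x hxA
    refine ⟨min r1 (min r2 r3) / 2, by positivity, ?_, ?_⟩
    · intro y hy
      apply hb3
      rw [mem_ball] at hy ⊢
      have h' : min r1 (min r2 r3) ≤ r3 := le_trans (min_le_right _ _) (min_le_right _ _)
      linarith
    · intro y hy
      rw [mem_ball] at hy
      have hy1 : dist y x < r1 := by
        have h' : min r1 (min r2 r3) ≤ r1 := min_le_left _ _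
        linarith
      have hy2 : dist y x < r2 := by
        have h' : min r1 (min r2 r3) ≤ r2 := le_trans (min_le_right _ _) (min_le_left _ _)
        linarith
      constructor
      · have := hb1 hy1; rwa [dist_eq_norm] at this
      · have := hb2 hy2; rwa [dist_eq_norm] at this
  choose! r hr0 hrA hrP using hrad
  obtain ⟨T, hTsub, hTcov⟩ := hEcomp.elim_nhds_subcover (fun x => ball x (r x))
    (fun x hx => ball_mem_nhds x (hr0 x hx))
  have hTne : T.Nonempty := by
    obtain ⟨x₀, hx₀⟩ := hEne
    have h' := hTcov hx₀
    rw [mem_iUnion₂] at h'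
    obtain ⟨i, hi, _⟩ := h'
    exact ⟨i, hi⟩
  refine ⟨T.inf' hTne r, ?_, ?_⟩
  · rw [gt_iff_lt, Finset.lt_inf'_iff]
    exact fun b hb => hr0 b (hTsub b hb)
  · intro y hy
    have h' := hTcov hy
    rw [mem_iUnion₂] at h'
    obtain ⟨x, hxT, hyx⟩ := h'
    have hxE := hTsub x hxT
    refine ⟨ball x (2 * r x), isOpen_ball, convex_ball _ _, hrA x hxE, ?_, ?_⟩
    · intro z hz
      rw [mem_ball] at hz hyx ⊢
      have hδx : T.inf' hTne r ≤ r x := Finset.inf'_le r hxT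
      calc dist z x ≤ dist z y + dist y x := dist_triangle _ _ _
      _ < 2 * r x := by linarith
    · intro z hz v
      have h8 := hrP x hxE z hz
      have pf := rayleigh_perturb (fderiv ℝ (gradient f) z) (fderiv ℝ (gradient f) x) v
      have pg := rayleigh_perturb (fderiv ℝ (gradient g) z) (fderiv ℝ (gradient g) x) v
      have haf := abs_le.1 pf
      have hag := abs_le.1 pg
      have h1f := hRayf x hxE v
      have h1g := hRayg x hxE v
      have hbf := mul_le_mul_of_nonneg_right h8.1.le (sq_nonneg ‖v‖)
      have hbg := mul_le_mul_of_nonneg_right h8.2.le (sq_nonneg ‖v‖)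
      constructor <;> nlinarith [sq_nonneg ‖v‖]

lemma caseB (hA₀ : IsOpen A₀) (hEsub : E ⊆ A₀) (hEcomp : IsCompact E) (hEne : E.Nonempty)
    (hf : ContDiffOn ℝ 2 f A₀) (hg : ContDiffOn ℝ 2 g A₀) (hη : 0 < η)
    (h1 : ∀ x ∈ frontier E, ∀ t ∈ Icc (0:ℝ) 1,
      t • gradient f x + (1 - t) • gradient g x ≠ 0)
    (hRayf : ∀ x ∈ E, ∀ v, η / 2 * ‖v‖ ^ 2 ≤ ⟪v, fderiv ℝ (gradient f) x v⟫)
    (hRayg : ∀ x ∈ E, ∀ v, η * ‖v‖ ^ 2 ≤ ⟪v, fderiv ℝ (gradient g) x v⟫) :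
    {x ∈ E | IsLocalMin f x}.Finite ∧ {x ∈ E | IsLocalMin g x}.Finite ∧
    {x ∈ E | IsLocalMin f x}.ncard = {x ∈ E | IsLocalMin g x}.ncard := by
  classical
  obtain ⟨δ, hδ, hUex⟩ := coverB hA₀ hEsub hEcomp hEne hf hg hη hRayf hRayg
  choose! Ux hUo hUc hUA hUb hUray using hUex
  set S : ℝ → Set (EuclideanSpace ℝ (Fin n)) :=
    fun t => {x | x ∈ E ∧ t • gradient f x + (1 - t) • gradient g x = 0} with hSdef
  have hGtD : ∀ t : ℝ, ∀ x ∈ A₀,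
      HasFDerivAt (fun z => t • gradient f z + (1 - t) • gradient g z)
        (t • fderiv ℝ (gradient f) x + (1 - t) • fderiv ℝ (gradient g) x) x :=
    fun t x hx => hasFDerivAt_comboG hA₀ hf hg t hx
  have hHt : ∀ t ∈ Icc (0:ℝ) 1, ∀ y ∈ E, ∀ z ∈ Ux y, ∀ v,
      η / 4 * ‖v‖ ^ 2 ≤
        ⟪v, (t • fderiv ℝ (gradient f) z + (1 - t) • fderiv ℝ (gradient g) z) v⟫ :=
    fun t ht y hy z hz v =>
      rayleigh_combo ht v ((hUray y hy z hz v).1) ((hUray y hy z hz v).2)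
  have hSep : ∀ t ∈ Icc (0:ℝ) 1, ∀ x ∈ S t, ∀ y ∈ S t, dist x y < δ → x = y := by
    intro t ht x hx y hy hxy
    obtain ⟨hxE, hx0⟩ := hx
    obtain ⟨hyE, hy0⟩ := hy
    by_contra hne
    have hxU : x ∈ Ux x := hUb x hxE (mem_ball_self hδ)
    have hyU : y ∈ Ux x := hUb x hxE (by rwa [mem_ball, dist_comm])
    have hsm := strong_mono (hUc x hxE) (fun z hz => hGtD t z (hUA x hxE hz))
        (fun z hz v => hHt t ht x hxE z hz v) hxU hyU
    simp only [hx0, hy0, sub_zero, inner_zero_right] at hsm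
    have hyx : y - x ≠ 0 := sub_ne_zero.2 (fun h => hne h.symm)
    have hpos : 0 < ‖y - x‖ := norm_pos_iff.2 hyx
    nlinarith [pow_pos hpos 2]
  have hFin : ∀ t ∈ Icc (0:ℝ) 1, (S t).Finite := by
    intro t ht
    obtain ⟨T2, hT2sub, hT2cov⟩ := hEcomp.elim_nhds_subcover (fun x => ball x (δ / 2))
      (fun x _ => ball_mem_nhds x (by linarith))
    have hsub : S t ⊆ ⋃ i ∈ T2, (S t ∩ ball i (δ / 2)) := by
      intro z hz
      have h' := hT2cov hz.1
      rw [mem_iUnion₂] at h' ⊢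
      obtain ⟨i, hi, hzi⟩ := h'
      exact ⟨i, hi, hz, hzi⟩
    apply Set.Finite.subset ?_ hsub
    apply Set.Finite.biUnion T2.finite_toSet
    intro i _
    apply Set.Subsingleton.finite
    intro a ha b hb
    apply hSep t ht a ha.1 b hb.1
    have h1' := mem_ball.1 ha.2
    have h2' := mem_ball.1 hb.2
    calc dist a b ≤ dist a i + dist i b := dist_triangle _ _ _
    _ < δ := by rw [dist_comm i b] at *; linarith
  have hMinf : {x ∈ E | IsLocalMin f x} = S 1 := by
    ext x
    simp only [mem_setOf_eq, hSdef]
    constructor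
    · rintro ⟨hxE, hloc⟩
      refine ⟨hxE, ?_⟩
      have h0 : fderiv ℝ f x = 0 := hloc.fderiv_eq_zero
      have hg0 : gradient f x = 0 := by
        show (toDual ℝ (EuclideanSpace ℝ (Fin n))).symm (fderiv ℝ f x) = 0
        rw [h0, map_zero]
      rw [hg0]
      simp
    · rintro ⟨hxE, hx0⟩
      refine ⟨hxE, ?_⟩
      have hgr0 : gradient f x = 0 := by simpa using hx0
      have hminU := isMinOn_of_gradient_zero (hUc x hxE)
          (fun z hz => hasGradientAt_of_mem hA₀ hf (hUA x hxE hz))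
          (fun z hz => hasFDerivAt_gradient hA₀ hf (hUA x hxE hz))
          (le_of_lt (by linarith : (0:ℝ) < η / 4))
          (fun z hz v => (hUray x hxE z hz v).1)
          (hUb x hxE (mem_ball_self hδ)) hgr0
      have hev : ∀ᶠ y in nhds x, f x ≤ f y := by
        filter_upwards [ball_mem_nhds x hδ] with y hy
        exact hminU y (hUb x hxE hy)
      exact hev
  have hMing : {x ∈ E | IsLocalMin g x} = S 0 := by
    ext x
    simp only [mem_setOf_eq, hSdef]
    constructor
    · rintro ⟨hxE, hloc⟩
      refine ⟨hxE, ?_⟩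
      have h0 : fderiv ℝ g x = 0 := hloc.fderiv_eq_zero
      have hg0 : gradient g x = 0 := by
        show (toDual ℝ (EuclideanSpace ℝ (Fin n))).symm (fderiv ℝ g x) = 0
        rw [h0, map_zero]
      rw [hg0]
      simp
    · rintro ⟨hxE, hx0⟩
      refine ⟨hxE, ?_⟩
      have hgr0 : gradient g x = 0 := by simpa using hx0
      have hminU := isMinOn_of_gradient_zero (hUc x hxE)
          (fun z hz => hasGradientAt_of_mem hA₀ hg (hUA x hxE hz))
          (fun z hz => hasFDerivAt_gradient hA₀ hg (hUA x hxE hz))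
          (le_of_lt (by linarith : (0:ℝ) < η / 4))
          (fun z hz v => (hUray x hxE z hz v).2)
          (hUb x hxE (mem_ball_self hδ)) hgr0
      have hev : ∀ᶠ y in nhds x, g x ≤ g y := by
        filter_upwards [ball_mem_nhds x hδ] with y hy
        exact hminU y (hUb x hxE hy)
      exact hev
  obtain ⟨M0, hM0⟩ := hEcomp.exists_bound_of_continuousOn
    (((gradient_continuousOn hA₀ hf).mono hEsub).sub
      ((gradient_continuousOn hA₀ hg).mono hEsub))
  set M : ℝ := max M0 0 with hMdef
  have hMge : (0:ℝ) ≤ M := le_max_right _ _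
  have hM1 : (0:ℝ) < M + 1 := by linarith
  have hMb : ∀ z ∈ E, ‖gradient f z - gradient g z‖ ≤ M :=
    fun z hz => le_trans (hM0 z hz) (le_max_left _ _)
  have hKey : ∀ t₀ ∈ Icc (0:ℝ) 1, ∃ ε > 0, ∀ t ∈ Icc (0:ℝ) 1,
      |t - t₀| < ε → (S t).ncard = (S t₀).ncard := by
    intro t₀ ht₀
    have hfin := hFin t₀ ht₀
    have hint : ∀ x ∈ S t₀, ∃ ρ > 0, closedBall x ρ ⊆ E := by
      intro x hx
      have hxE := hx.1
      have hxnotfr : x ∉ frontier E := fun hfr => h1 x hfr t₀ ht₀ hx.2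
      have hxint : x ∈ interior E := by
        by_contra hnot
        exact hxnotfr ⟨subset_closure hxE, hnot⟩
      obtain ⟨ρ', hρ'pos, hballρ⟩ := Metric.isOpen_iff.1 isOpen_interior x hxint
      exact ⟨ρ' / 2, by linarith,
        subset_trans (closedBall_subset_ball (by linarith))
          (hballρ.trans interior_subset)⟩
    choose! ρ hρ0 hρsub using hint
    obtain ⟨r, hr0, hrδ, hrint⟩ :
        ∃ r > 0, r ≤ δ / 2 ∧ ∀ x ∈ S t₀, closedBall x r ⊆ E := by
      by_cases hne : hfin.toFinset.Nonempty
      · refine ⟨min (δ / 2) (hfin.toFinset.inf' hne ρ), ?_, min_le_left _ _, ?_⟩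
        · apply lt_min (by linarith)
          rw [Finset.lt_inf'_iff]
          exact fun b hb => hρ0 b (hfin.mem_toFinset.1 hb)
        · intro x hx
          refine subset_trans (closedBall_subset_closedBall ?_) (hρsub x hx)
          exact le_trans (min_le_right _ _) (Finset.inf'_le ρ (hfin.mem_toFinset.2 hx))
      · refine ⟨δ / 2, by linarith, le_refl _, ?_⟩
        intro x hx
        exact absurd (hfin.mem_toFinset.2 hx) (fun h => hne ⟨x, h⟩)
    set C : Set (EuclideanSpace ℝ (Fin n)) :=
      E \ ⋃ x ∈ hfin.toFinset, ball x r with hCdef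
    have hCcomp : IsCompact C := hEcomp.diff (isOpen_biUnion fun i _ => isOpen_ball)
    obtain ⟨m, hm0, hmlb⟩ :
        ∃ m > 0, ∀ z ∈ C, m ≤ ‖t₀ • gradient f z + (1 - t₀) • gradient g z‖ := by
      rcases C.eq_empty_or_nonempty with hCe | hCne
      · refine ⟨1, one_pos, ?_⟩
        rw [hCe]; intro z hz; exact absurd hz (notMem_empty z)
      · have hcont : ContinuousOn
            (fun z => ‖t₀ • gradient f z + (1 - t₀) • gradient g z‖) C :=
          ((continuousOn_comboG hA₀ hf hg t₀).mono
            (subset_trans diff_subset hEsub)).norm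
        obtain ⟨z₀, hz₀C, hz₀min⟩ := hCcomp.exists_isMinOn hCne hcont
        refine ⟨‖t₀ • gradient f z₀ + (1 - t₀) • gradient g z₀‖, ?_,
          fun z hz => hz₀min hz⟩
        rw [gt_iff_lt, norm_pos_iff]
        intro h0
        have hz₀S : z₀ ∈ S t₀ := ⟨hz₀C.1, h0⟩
        have hmem : z₀ ∈ ⋃ x ∈ hfin.toFinset, ball x r :=
          mem_iUnion₂.2 ⟨z₀, hfin.mem_toFinset.2 hz₀S, mem_ball_self hr0⟩
        exact hz₀C.2 hmem
    refine ⟨min (m / (M + 1)) (η / 4 * r / (M + 1)),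
      lt_min (div_pos hm0 hM1) (div_pos (mul_pos (by linarith) hr0) hM1), ?_⟩
    intro t ht htd
    have hGdiff : ∀ x ∈ E,
        ‖(t • gradient f x + (1 - t) • gradient g x)
          - (t₀ • gradient f x + (1 - t₀) • gradient g x)‖ ≤ |t - t₀| * M := by
      intro x hx
      rw [comboG_sub, norm_smul, Real.norm_eq_abs]
      exact mul_le_mul_of_nonneg_left (hMb x hx) (abs_nonneg _)
    have hεM1 : |t - t₀| * M < η / 4 * r := by
      have hb : |t - t₀| < η / 4 * r / (M + 1) := lt_of_lt_of_le htd (min_le_right _ _)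
      have hmul := mul_lt_mul_of_pos_right hb hM1
      rw [div_mul_cancel₀ _ (ne_of_gt hM1)] at hmul
      nlinarith [abs_nonneg (t - t₀)]
    have hεM2 : |t - t₀| * M < m := by
      have hb : |t - t₀| < m / (M + 1) := lt_of_lt_of_le htd (min_le_left _ _)
      have hmul := mul_lt_mul_of_pos_right hb hM1
      rw [div_mul_cancel₀ _ (ne_of_gt hM1)] at hmul
      nlinarith [abs_nonneg (t - t₀)]
    have hexist : ∀ x ∈ S t₀,
        ∃ z, (z ∈ E ∧ t • gradient f z + (1 - t) • gradient g z = 0) ∧ dist z x < r := by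
      intro x hx
      have hxE := hx.1
      have hsmall : ‖t • gradient f x + (1 - t) • gradient g x‖ < η / 4 * r := by
        calc ‖t • gradient f x + (1 - t) • gradient g x‖
            = ‖(t • gradient f x + (1 - t) • gradient g x)
                - (t₀ • gradient f x + (1 - t₀) • gradient g x)‖ := by
              rw [hx.2, sub_zero]
          _ ≤ |t - t₀| * M := hGdiff x hxE
          _ < η / 4 * r := hεM1
      obtain ⟨z, hzd, hz0⟩ := exists_gradient_zero (hUc x hxE)
        (fun z hz => hasGradientAt_combo hA₀ hf hg t (hUA x hxE hz))
        (fun z hz => hGtD t z (hUA x hxE hz))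
        ((continuousOn_comboG hA₀ hf hg t).mono (hUA x hxE))
        (show (0:ℝ) < η / 4 by linarith)
        (fun z hz v => hHt t ht x hxE z hz v)
        hr0
        (subset_trans (closedBall_subset_ball (by linarith : r < δ)) (hUb x hxE))
        hsmall
      exact ⟨z, ⟨hrint x hx (mem_closedBall.2 hzd.le), hz0⟩, hzd⟩
    choose! θ hθS hθd using hexist
    have himg : S t = θ '' (S t₀) := by
      apply Subset.antisymm
      · intro z hz
        have hzE := hz.1
        have hznC : z ∉ C := by
          intro hzC
          have hge := hmlb z hzC
          have hle : ‖t₀ • gradient f z + (1 - t₀) • gradient g z‖ ≤ |t - t₀| * M := by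
            calc ‖t₀ • gradient f z + (1 - t₀) • gradient g z‖
                = ‖(t₀ • gradient f z + (1 - t₀) • gradient g z)
                    - (t • gradient f z + (1 - t) • gradient g z)‖ := by
                  rw [hz.2, sub_zero]
              _ = ‖(t₀ - t) • (gradient f z - gradient g z)‖ := by rw [comboG_sub]
              _ = |t₀ - t| * ‖gradient f z - gradient g z‖ := by
                  rw [norm_smul, Real.norm_eq_abs]
              _ = |t - t₀| * ‖gradient f z - gradient g z‖ := by rw [abs_sub_comm]
              _ ≤ |t - t₀| * M :=
                  mul_le_mul_of_nonneg_left (hMb z hzE) (abs_nonneg _)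
          linarith
        have hzmem : z ∈ ⋃ x ∈ hfin.toFinset, ball x r := by
          by_contra hnot
          exact hznC ⟨hzE, hnot⟩
        rw [mem_iUnion₂] at hzmem
        obtain ⟨x, hxT, hzx⟩ := hzmem
        have hxS : x ∈ S t₀ := hfin.mem_toFinset.1 hxT
        refine ⟨x, hxS, ?_⟩
        have hθin : θ x ∈ S t := ⟨(hθS x hxS).1, (hθS x hxS).2⟩
        apply hSep t ht (θ x) hθin z hz
        have hd1 := hθd x hxS
        have hd2 := mem_ball.1 hzx
        calc dist (θ x) z ≤ dist (θ x) x + dist x z := dist_triangle _ _ _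
        _ < δ := by rw [dist_comm x z]; linarith
      · rintro _ ⟨x, hxS, rfl⟩
        exact ⟨(hθS x hxS).1, (hθS x hxS).2⟩
    have hinj : InjOn θ (S t₀) := by
      intro x1 hx1 x2 hx2 heq
      apply hSep t₀ ht₀ x1 hx1 x2 hx2
      have d1 := hθd x1 hx1
      have d2 := hθd x2 hx2
      calc dist x1 x2 ≤ dist x1 (θ x1) + dist (θ x1) x2 := dist_triangle _ _ _
      _ = dist x1 (θ x1) + dist (θ x2) x2 := by rw [heq]
      _ < r + r := by
          rw [dist_comm x1 (θ x1)]
          exact add_lt_add d1 d2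
      _ ≤ δ := by linarith
    rw [himg, Set.ncard_image_of_injOn hinj]
  have hConst : ∀ t ∈ Icc (0:ℝ) 1, (S t).ncard = (S 0).ncard := by
    choose! ε hε0 hεP using hKey
    set U : Set ℝ :=
      ⋃ t₀ ∈ {t | t ∈ Icc (0:ℝ) 1 ∧ (S t).ncard = (S 0).ncard}, ball t₀ (ε t₀) with hU
    set W : Set ℝ :=
      ⋃ t₀ ∈ {t | t ∈ Icc (0:ℝ) 1 ∧ (S t).ncard ≠ (S 0).ncard}, ball t₀ (ε t₀) with hW
    have hUopen : IsOpen U := isOpen_biUnion fun _ _ => isOpen_ball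
    have hWopen : IsOpen W := isOpen_biUnion fun _ _ => isOpen_ball
    have hsub : Icc (0:ℝ) 1 ⊆ U ∪ W := by
      intro t ht
      by_cases hc : (S t).ncard = (S 0).ncard
      · exact Or.inl (mem_biUnion ⟨ht, hc⟩ (mem_ball_self (hε0 t ht)))
      · exact Or.inr (mem_biUnion ⟨ht, hc⟩ (mem_ball_self (hε0 t ht)))
    have hUprop : ∀ s ∈ Icc (0:ℝ) 1, s ∈ U → (S s).ncard = (S 0).ncard := by
      intro s hs hsU
      rw [hU, mem_iUnion₂] at hsU
      obtain ⟨t₁, ⟨ht₁Icc, ht₁eq⟩, hball⟩ := hsU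
      have hd : |s - t₁| < ε t₁ := by
        rw [← Real.dist_eq]
        exact mem_ball.1 hball
      rw [hεP t₁ ht₁Icc s hs hd, ht₁eq]
    have hWprop : ∀ s ∈ Icc (0:ℝ) 1, s ∈ W → (S s).ncard ≠ (S 0).ncard := by
      intro s hs hsW
      rw [hW, mem_iUnion₂] at hsW
      obtain ⟨t₁, ⟨ht₁Icc, ht₁ne⟩, hball⟩ := hsW
      have hd : |s - t₁| < ε t₁ := by
        rw [← Real.dist_eq]
        exact mem_ball.1 hball
      rw [hεP t₁ ht₁Icc s hs hd]
      exact ht₁ne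
    intro t ht
    by_contra hc
    have hWne : (Icc (0:ℝ) 1 ∩ W).Nonempty :=
      ⟨t, ht, mem_biUnion ⟨ht, hc⟩ (mem_ball_self (hε0 t ht))⟩
    have h0Icc : (0:ℝ) ∈ Icc (0:ℝ) 1 := ⟨le_refl 0, zero_le_one⟩
    have hUne : (Icc (0:ℝ) 1 ∩ U).Nonempty :=
      ⟨0, h0Icc, mem_biUnion ⟨h0Icc, rfl⟩ (mem_ball_self (hε0 0 h0Icc))⟩
    obtain ⟨s, hsIcc, hsU, hsW⟩ :=
      isPreconnected_Icc U W hUopen hWopen hsub hUne hWne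
    exact hWprop s hsIcc hsW (hUprop s hsIcc hsU)
  refine ⟨?_, ?_, ?_⟩
  · rw [hMinf]; exact hFin 1 (right_mem_Icc.2 zero_le_one)
  · rw [hMing]; exact hFin 0 (left_mem_Icc.2 zero_le_one)
  · rw [hMinf, hMing]; exact hConst 1 (right_mem_Icc.2 zero_le_one)

lemma caseA (hn : 0 < n) (hA₀ : IsOpen A₀) (hEsub : E ⊆ A₀)
    (hf : ContDiffOn ℝ 2 f A₀) (hg : ContDiffOn ℝ 2 g A₀) (hη : 0 < η)
    (h2 : ∀ x ∈ E, ‖fderiv ℝ (gradient f) x - fderiv ℝ (gradient g) x‖ ≤ η / 2)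
    (hneg : ∀ x ∈ E, lambdaMin (fderiv ℝ (gradient g) x) ≤ -η) :
    {x ∈ E | IsLocalMin f x} = ∅ ∧ {x ∈ E | IsLocalMin g x} = ∅ := by
  constructor
  · rw [eq_empty_iff_forall_notMem]
    rintro x ⟨hxE, hloc⟩
    obtain ⟨v, hv1, hvlt⟩ := exists_rayleigh_lt (fderiv ℝ (gradient g) x) hn
      (lt_of_le_of_lt (hneg x hxE) (by linarith : -η < -(3 * η / 4)))
    have hperturb := rayleigh_perturb (fderiv ℝ (gradient f) x)
      (fderiv ℝ (gradient g) x) v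
    rw [hv1] at hperturb
    simp only [one_pow, mul_one] at hperturb
    have habs := abs_le.1 hperturb
    have hh2 := h2 x hxE
    have hfneg : ⟪v, fderiv ℝ (gradient f) x v⟫ < 0 := by linarith [habs.2]
    have hGrad : ∀ᶠ y in nhds x, HasGradientAt f (gradient f y) y := by
      filter_upwards [hA₀.mem_nhds (hEsub hxE)] with y hy
      exact hasGradientAt_of_mem hA₀ hf hy
    exact not_isLocalMin_of_neg_rayleigh hGrad
      (hasFDerivAt_gradient hA₀ hf (hEsub hxE)) hfneg hloc
  · rw [eq_empty_iff_forall_notMem]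
    rintro x ⟨hxE, hloc⟩
    obtain ⟨v, hv1, hvlt⟩ := exists_rayleigh_lt (fderiv ℝ (gradient g) x) hn
      (lt_of_le_of_lt (hneg x hxE) (by linarith : -η < -(3 * η / 4)))
    have hgneg : ⟪v, fderiv ℝ (gradient g) x v⟫ < 0 := by linarith
    have hGrad : ∀ᶠ y in nhds x, HasGradientAt g (gradient g y) y := by
      filter_upwards [hA₀.mem_nhds (hEsub hxE)] with y hy
      exact hasGradientAt_of_mem hA₀ hg hy
    exact not_isLocalMin_of_neg_rayleigh hGrad
      (hasFDerivAt_gradient hA₀ hg (hEsub hxE)) hgneg hloc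

end Main

theorem stmt_2 {n : ℕ} (A₀ : Set (EuclideanSpace ℝ (Fin n))) (hA₀ : IsOpen A₀)
    (E : Set (EuclideanSpace ℝ (Fin n))) (hEsub : E ⊆ A₀)
    (hEconn : IsConnected E) (hEcomp : IsCompact E)
    (f g : EuclideanSpace ℝ (Fin n) → ℝ)
    (hf : ContDiffOn ℝ 2 f A₀) (hg : ContDiffOn ℝ 2 g A₀)
    (η : ℝ) (hη : 0 < η)
    (h1 : ∀ x ∈ frontier E, ∀ t ∈ Icc (0:ℝ) 1,
      t • gradient f x + (1 - t) • gradient g x ≠ 0)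
    (h2 : ∀ x ∈ E, ‖fderiv ℝ (gradient f) x - fderiv ℝ (gradient g) x‖ ≤ η / 2)
    (h3 : ∀ x ∈ E, η ≤ |lambdaMin (fderiv ℝ (gradient g) x)|) :
    {x ∈ E | IsLocalMin f x}.Finite ∧ {x ∈ E | IsLocalMin g x}.Finite ∧
    {x ∈ E | IsLocalMin f x}.ncard = {x ∈ E | IsLocalMin g x}.ncard := by
  rcases Nat.eq_zero_or_pos n with hn | hn
  · exfalso
    subst hn
    obtain ⟨x₀, hx₀⟩ := hEconn.nonempty
    have h3' := h3 x₀ hx₀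
    have hset : {r : ℝ | ∃ v : EuclideanSpace ℝ (Fin 0), ‖v‖ = 1 ∧
        r = ⟪v, fderiv ℝ (gradient g) x₀ v⟫} = ∅ := by
      rw [eq_empty_iff_forall_notMem]
      rintro r ⟨v, hv, -⟩
      have hv0 : v = 0 := Subsingleton.elim v 0
      rw [hv0, norm_zero] at hv
      exact zero_ne_one hv
    have hlam : lambdaMin (fderiv ℝ (gradient g) x₀) = 0 := by
      rw [lambdaMin, hset, Real.sInf_empty]
    rw [hlam, abs_zero] at h3'
    linarith
  have hdich : ∀ x ∈ E, (∀ v, ‖v‖ = 1 → η ≤ ⟪v, fderiv ℝ (gradient g) x v⟫) ∨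
      lambdaMin (fderiv ℝ (gradient g) x) ≤ -η := by
    intro x hx
    rcases le_abs.1 (h3 x hx) with h | h
    · exact Or.inl fun v hv => le_trans h (lambdaMin_le _ hv)
    · exact Or.inr (by linarith)
  by_cases hcase : ∀ x ∈ E, ∀ v, ‖v‖ = 1 → η ≤ ⟪v, fderiv ℝ (gradient g) x v⟫
  · have hRayg : ∀ x ∈ E, ∀ v, η * ‖v‖ ^ 2 ≤ ⟪v, fderiv ℝ (gradient g) x v⟫ :=
      fun x hx => rayleigh_scaled _ hη.le (hcase x hx)
    have hRayf : ∀ x ∈ E, ∀ v, η / 2 * ‖v‖ ^ 2 ≤ ⟪v, fderiv ℝ (gradient f) x v⟫ := by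
      intro x hx v
      have hp := rayleigh_perturb (fderiv ℝ (gradient f) x) (fderiv ℝ (gradient g) x) v
      have habs := abs_le.1 hp
      have hb := mul_le_mul_of_nonneg_right (h2 x hx) (sq_nonneg ‖v‖)
      have hrg := hRayg x hx v
      nlinarith [sq_nonneg ‖v‖]
    exact caseB hA₀ hEsub hEcomp hEconn.nonempty hf hg hη h1 hRayf hRayg
  · have hallneg : ∀ x ∈ E, lambdaMin (fderiv ℝ (gradient g) x) ≤ -η := by
      push_neg at hcase
      obtain ⟨x₂, hx₂E, v₂, hv₂, hlt₂⟩ := hcase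
      have hx₂neg : lambdaMin (fderiv ℝ (gradient g) x₂) ≤ -η := by
        rcases hdich x₂ hx₂E with h | h
        · exact absurd (h v₂ hv₂) (not_le.2 hlt₂)
        · exact h
      have hrad : ∀ x ∈ E, ∃ r > 0, ∀ y : EuclideanSpace ℝ (Fin n), dist y x < r →
          ‖fderiv ℝ (gradient g) y - fderiv ℝ (gradient g) x‖ < η / 4 := by
        intro x hx
        have hcg : ContinuousAt (fderiv ℝ (gradient g)) x :=
          (hessian_continuousOn hA₀ hg).continuousAt (hA₀.mem_nhds (hEsub hx))
        obtain ⟨r, hr, hb⟩ := Metric.continuousAt_iff.1 hcg (η / 4) (by linarith)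
        exact ⟨r, hr, fun y hy => by have := hb hy; rwa [dist_eq_norm] at this⟩
      choose! rP hrP0 hrPb using hrad
      set P : Set (EuclideanSpace ℝ (Fin n)) :=
        {x | x ∈ E ∧ ∀ v, ‖v‖ = 1 → η ≤ ⟪v, fderiv ℝ (gradient g) x v⟫} with hPdef
      set U : Set (EuclideanSpace ℝ (Fin n)) := ⋃ x ∈ P, ball x (rP x) with hUdef
      set W : Set (EuclideanSpace ℝ (Fin n)) := ⋃ x ∈ E \ P, ball x (rP x) with hWdef
      have hUopen : IsOpen U := isOpen_biUnion fun _ _ => isOpen_ball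
      have hWopen : IsOpen W := isOpen_biUnion fun _ _ => isOpen_ball
      have hcover : E ⊆ U ∪ W := by
        intro y hy
        by_cases hyP : y ∈ P
        · exact Or.inl (mem_biUnion hyP (mem_ball_self (hrP0 y hy)))
        · exact Or.inr (mem_biUnion ⟨hy, hyP⟩ (mem_ball_self (hrP0 y hy)))
      have hUbig : ∀ y ∈ E, y ∈ U → 3 * η / 4 ≤ lambdaMin (fderiv ℝ (gradient g) y) := by
        intro y hy hyU
        rw [hUdef, mem_iUnion₂] at hyU
        obtain ⟨x₁, hx₁P, hyb⟩ := hyU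
        apply le_lambdaMin _ hn
        intro v hv
        have hpert := rayleigh_perturb (fderiv ℝ (gradient g) y)
          (fderiv ℝ (gradient g) x₁) v
        rw [hv, one_pow, mul_one] at hpert
        have habs := abs_le.1 hpert
        have hnb := hrPb x₁ hx₁P.1 y (mem_ball.1 hyb)
        have hx₁v := hx₁P.2 v hv
        linarith [habs.1]
      have hWsmall : ∀ y ∈ E, y ∈ W → lambdaMin (fderiv ℝ (gradient g) y) ≤ -η / 2 := by
        intro y hy hyW
        rw [hWdef, mem_iUnion₂] at hyW
        obtain ⟨x₁, hx₁EP, hyb⟩ := hyW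
        have hx₁neg : lambdaMin (fderiv ℝ (gradient g) x₁) ≤ -η := by
          rcases hdich x₁ hx₁EP.1 with h | h
          · exact absurd ⟨hx₁EP.1, h⟩ hx₁EP.2
          · exact h
        obtain ⟨w, hw1, hwlt⟩ := exists_rayleigh_lt (fderiv ℝ (gradient g) x₁) hn
          (lt_of_le_of_lt hx₁neg (by linarith : -η < -(3 * η / 4)))
        have hpert := rayleigh_perturb (fderiv ℝ (gradient g) y)
          (fderiv ℝ (gradient g) x₁) w
        rw [hw1, one_pow, mul_one] at hpert
        have habs := abs_le.1 hpert
        have hnb := hrPb x₁ hx₁EP.1 y (mem_ball.1 hyb)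
        have : ⟪w, fderiv ℝ (gradient g) y w⟫ ≤ -η / 2 := by linarith [habs.2]
        exact le_trans (lambdaMin_le _ hw1) this
      intro x hx
      rcases hdich x hx with hP | hneg
      · exfalso
        have hUne : (E ∩ U).Nonempty :=
          ⟨x, hx, mem_biUnion (⟨hx, hP⟩ : x ∈ P) (mem_ball_self (hrP0 x hx))⟩
        have hx₂P : x₂ ∉ P := fun h => absurd (h.2 v₂ hv₂) (not_le.2 hlt₂)
        have hWne : (E ∩ W).Nonempty :=
          ⟨x₂, hx₂E, mem_biUnion ⟨hx₂E, hx₂P⟩ (mem_ball_self (hrP0 x₂ hx₂E))⟩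
        obtain ⟨y, hyE, hyU, hyW⟩ :=
          hEconn.isPreconnected U W hUopen hWopen hcover hUne hWne
        have hb := hUbig y hyE hyU
        have hs := hWsmall y hyE hyW
        linarith
      · exact hneg
    obtain ⟨hfe, hge⟩ := caseA hn hA₀ hEsub hf hg hη h2 hallneg
    rw [hfe, hge]
    exact ⟨finite_empty, finite_empty, rfl⟩
end LambdaMin
end

section
/- Let X ∈ ℝ^{N×N} be symmetric positive semidefinite of rank r with eigenvalues λ₁ ≥ ⋯ ≥ λ_r > 0, let 1 ≤ k ≤ r, assume λ_{k+1} ≤ λ_k/12 (with λ_{k+1} = 0 if k = r), let W_k ∈ ℝ^{N×k} have orthonormal columns that are eigenvectors of X for λ₁,…,λ_k, let Λ_k = diag(λ₁,…,λ_k), U* = W_k Λ_k^{1/2}, and κ = √(λ₁/λ_k). Suppose U ∈ ℝ^{N×k} has full column rank and min_{P ∈ O_k} ‖U − U*P‖_F ≤ 0.2 κ⁻¹ √λ_k. Then for every D ∈ ℝ^{N×k} with DᵀU = UᵀD, one has (1/2)‖UDᵀ + DUᵀ‖_F² + ⟨UUᵀ − X, DDᵀ⟩ ≥ 0.19 λ_k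 ‖D‖_F². -/
open Matrix

/-- Frobenius norm of a real matrix. -/
noncomputable def frob {m n : Type*} [Fintype m] [Fintype n] (M : Matrix m n ℝ) : ℝ :=
  Real.sqrt (∑ i, ∑ j, (M i j) ^ 2)

/-- Trace (entrywise) inner product of two real matrices. -/
noncomputable def mip {m n : Type*} [Fintype m] [Fintype n] (A B : Matrix m n ℝ) : ℝ :=
  ∑ i, ∑ j, A i j * B i j

section helpers
variable {m n p : Type*} [Fintype m] [Fintype n] [Fintype p]

lemma mip_self_nonneg (A : Matrix m n ℝ) : 0 ≤ mip A A :=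
  Finset.sum_nonneg fun _ _ => Finset.sum_nonneg fun _ _ => mul_self_nonneg _

lemma frob_nonneg (A : Matrix m n ℝ) : 0 ≤ frob A := Real.sqrt_nonneg _

lemma frob_sq (A : Matrix m n ℝ) : frob A ^ 2 = mip A A := by
  rw [frob, Real.sq_sqrt (Finset.sum_nonneg fun i _ => Finset.sum_nonneg fun j _ => sq_nonneg (A i j))]
  simp [mip, sq]

lemma mip_comm (A B : Matrix m n ℝ) : mip A B = mip B A := by
  simp [mip, mul_comm]

lemma mip_add_left (A B C : Matrix m n ℝ) : mip (A + B) C = mip A C + mip B C := by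
  simp [mip, add_mul, Finset.sum_add_distrib]

lemma mip_sub_left (A B C : Matrix m n ℝ) : mip (A - B) C = mip A C - mip B C := by
  simp [mip, sub_mul, Finset.sum_sub_distrib]

lemma mip_sub_right (A B C : Matrix m n ℝ) : mip A (B - C) = mip A B - mip A C := by
  rw [mip_comm, mip_sub_left, mip_comm B A, mip_comm C A]

lemma mip_transpose (A : Matrix m n ℝ) (B : Matrix n m ℝ) : mip Aᵀ B = mip A Bᵀ := by
  simp only [mip, transpose_apply]
  exact Finset.sum_comm

lemma mip_mul_right (A : Matrix m n ℝ) (B : Matrix n p ℝ) (C : Matrix m p ℝ) :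
    mip (A * B) C = mip A (C * Bᵀ) := by
  simp only [mip, Matrix.mul_apply, Matrix.transpose_apply, Finset.sum_mul, Finset.mul_sum]
  refine Finset.sum_congr rfl fun i _ => ?_
  rw [Finset.sum_comm]
  exact Finset.sum_congr rfl fun j _ => Finset.sum_congr rfl fun q _ => by ring

lemma mip_transpose' (A B : Matrix m n ℝ) : mip A B = mip Aᵀ Bᵀ := by
  rw [mip_transpose, transpose_transpose]

lemma mip_mul_left (A : Matrix m n ℝ) (B : Matrix n p ℝ) (C : Matrix m p ℝ) :
    mip (A * B) C = mip B (Aᵀ * C) := by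
  rw [mip_transpose' (A * B) C, transpose_mul, mip_mul_right, transpose_transpose,
    mip_transpose, transpose_mul, transpose_transpose]

lemma mip_cs (A B : Matrix m n ℝ) : mip A B ≤ frob A * frob B := by
  have h := Real.sum_mul_le_sqrt_mul_sqrt (Finset.univ : Finset (m × n))
    (fun q => A q.1 q.2) (fun q => B q.1 q.2)
  simpa [mip, frob, Fintype.sum_prod_type] using h

lemma neg_frob_le_mip (A B : Matrix m n ℝ) : -(frob A * frob B) ≤ mip A B := by
  have h := mip_cs (-A) B
  have h1 : mip (-A) B = -mip A B := by simp [mip, Finset.sum_neg_distrib]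
  have h2 : frob (-A) = frob A := by simp [frob]
  rw [h1, h2] at h
  linarith

lemma frob_transpose (A : Matrix m n ℝ) : frob Aᵀ = frob A := by
  rw [frob, frob, Finset.sum_comm]
  rfl

lemma frob_mul_le (A : Matrix m n ℝ) (B : Matrix n p ℝ) :
    frob (A * B) ≤ frob A * frob B := by
  rw [frob, frob, frob, ← Real.sqrt_mul (Finset.sum_nonneg fun i _ =>
    Finset.sum_nonneg fun j _ => sq_nonneg (A i j))]
  apply Real.sqrt_le_sqrt
  calc ∑ i, ∑ l, (A * B) i l ^ 2
      ≤ ∑ i, ∑ l, (∑ j, A i j ^ 2) * (∑ j, B j l ^ 2) := by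
        refine Finset.sum_le_sum fun i _ => Finset.sum_le_sum fun l _ => ?_
        rw [Matrix.mul_apply]
        exact Finset.sum_mul_sq_le_sq_mul_sq _ _ _
    _ = (∑ i, ∑ j, A i j ^ 2) * (∑ j, ∑ l, B j l ^ 2) := by
        simp only [← Finset.mul_sum]
        rw [← Finset.sum_mul]
        congr 1
        exact Finset.sum_comm

lemma sumsq_mulVec_quadform (B : Matrix m n ℝ) (y : n → ℝ) :
    ∑ i, ((B *ᵥ y) i) ^ 2 = ((Bᵀ * B) *ᵥ y) ⬝ᵥ y := by
  have h0 : ∑ i, ((B *ᵥ y) i) ^ 2 = (B *ᵥ y) ⬝ᵥ (B *ᵥ y) := by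
    simp [dotProduct, sq]
  rw [h0, Matrix.dotProduct_mulVec, ← Matrix.mulVec_transpose, Matrix.mulVec_mulVec]

lemma sumsq_mulVec_orth [DecidableEq n] (B : Matrix m n ℝ) (hB : Bᵀ * B = 1) (y : n → ℝ) :
    ∑ i, ((B *ᵥ y) i) ^ 2 = ∑ j, (y j) ^ 2 := by
  rw [sumsq_mulVec_quadform, hB, Matrix.one_mulVec]
  simp [dotProduct, sq]

lemma sumsq_mulVec_le (A : Matrix m n ℝ) (x : n → ℝ) :
    ∑ i, ((A *ᵥ x) i) ^ 2 ≤ (frob A) ^ 2 * ∑ j, (x j) ^ 2 := by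
  rw [frob, Real.sq_sqrt (Finset.sum_nonneg fun i _ =>
    Finset.sum_nonneg fun j _ => sq_nonneg (A i j)), Finset.sum_mul]
  refine Finset.sum_le_sum fun i _ => ?_
  exact Finset.sum_mul_sq_le_sq_mul_sq _ _ _

end helpers

section extra2
variable {m n p : Type*} [Fintype m] [Fintype n] [Fintype p]

variable {m n p : Type*} [Fintype m] [Fintype n] [Fintype p]

lemma mip_comm' (A B : Matrix m n ℝ) : mip A B = mip B A := by
  simp [mip, mul_comm]

lemma mip_transpose'' (A : Matrix m n ℝ) (B : Matrix n m ℝ) : mip Aᵀ B = mip A Bᵀ := by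
  simp only [mip, transpose_apply]
  exact Finset.sum_comm

lemma mip_mul_right' (A : Matrix m n ℝ) (B : Matrix n p ℝ) (C : Matrix m p ℝ) :
    mip (A * B) C = mip A (C * Bᵀ) := by
  simp only [mip, Matrix.mul_apply, Matrix.transpose_apply, Finset.sum_mul, Finset.mul_sum]
  refine Finset.sum_congr rfl fun i _ => ?_
  rw [Finset.sum_comm]
  exact Finset.sum_congr rfl fun j _ => Finset.sum_congr rfl fun q _ => by ring

lemma mip_mul_left' (A : Matrix m n ℝ) (B : Matrix n p ℝ) (C : Matrix m p ℝ) :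
    mip (A * B) C = mip B (Aᵀ * C) := by
  have e1 : mip (A * B) C = mip (A * B)ᵀ Cᵀ := by
    rw [mip_transpose'', transpose_transpose]
  rw [e1, transpose_mul, mip_mul_right', transpose_transpose, mip_transpose'',
    transpose_mul, transpose_transpose]

lemma mip_cross (A B : Matrix m n ℝ) (Dm : Matrix m p ℝ) :
    mip (A * Bᵀ) (Dm * Dmᵀ) = mip (Dmᵀ * A) (Dmᵀ * B) := by
  rw [mip_comm', mip_mul_left', ← Matrix.mul_assoc, mip_comm', mip_mul_right',
    transpose_transpose]

lemma mip_diagonal [DecidableEq m] (g : m → ℝ) (M : Matrix m m ℝ) :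
    mip (diagonal g) M = ∑ j, g j * M j j := by
  simp [mip, Matrix.diagonal_apply, ite_mul, zero_mul, Finset.sum_ite_eq]


lemma mip_add_left' (A B C : Matrix m n ℝ) : mip (A + B) C = mip A C + mip B C := by
  simp [mip, add_mul, Finset.sum_add_distrib]

lemma mip_add_right' (A B C : Matrix m n ℝ) : mip A (B + C) = mip A B + mip A C := by
  rw [mip_comm', mip_add_left', mip_comm' B A, mip_comm' C A]

lemma mip_sub_left' (A B C : Matrix m n ℝ) : mip (A - B) C = mip A C - mip B C := by
  simp [mip, sub_mul, Finset.sum_sub_distrib]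

lemma mip_sub_right' (A B C : Matrix m n ℝ) : mip A (B - C) = mip A B - mip A C := by
  rw [mip_comm', mip_sub_left', mip_comm' B A, mip_comm' C A]

end extra2

set_option maxHeartbeats 1600000 in
theorem stmt_8 {N r k : ℕ} (hk1 : 1 ≤ k) (hkr : k ≤ r)
    (W : Matrix (Fin N) (Fin r) ℝ) (lam : Fin r → ℝ)
    (hW : Wᵀ * W = 1) (hpos : ∀ i, 0 < lam i)
    (hdesc : ∀ i j : Fin r, i ≤ j → lam j ≤ lam i)
    (X : Matrix (Fin N) (Fin N) ℝ) (hX : X = W * diagonal lam * Wᵀ)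
    (hgap : (if h : k < r then lam ⟨k, h⟩ else 0) ≤ lam ⟨k - 1, by omega⟩ / 12)
    (Ustar : Matrix (Fin N) (Fin k) ℝ)
    (hUstar : Ustar = W.submatrix id (Fin.castLE hkr) *
      diagonal (fun j : Fin k => Real.sqrt (lam (Fin.castLE hkr j))))
    (κ : ℝ) (hκ : κ = Real.sqrt (lam ⟨0, by omega⟩ / lam ⟨k - 1, by omega⟩))
    (U : Matrix (Fin N) (Fin k) ℝ) (hUrank : U.rank = k)
    (hnear : sInf {t : ℝ | ∃ P : Matrix (Fin k) (Fin k) ℝ,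
        Pᵀ * P = 1 ∧ t = frob (U - Ustar * P)} ≤
      0.2 * κ⁻¹ * Real.sqrt (lam ⟨k - 1, by omega⟩))
    (D : Matrix (Fin N) (Fin k) ℝ) (hD : Dᵀ * U = Uᵀ * D) :
    0.19 * lam ⟨k - 1, by omega⟩ * frob D ^ 2 ≤
      (1 / 2) * frob (U * Dᵀ + D * Uᵀ) ^ 2 + mip (U * Uᵀ - X) (D * Dᵀ) := by
  have hc : (0:ℝ) < lam ⟨k - 1, by omega⟩ := hpos _
  have hL : (0:ℝ) < lam ⟨0, by omega⟩ := hpos _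
  set c : ℝ := lam ⟨k - 1, by omega⟩ with hcdef
  set L : ℝ := lam ⟨0, by omega⟩ with hLdef
  have hcL : c ≤ L := hdesc ⟨0, by omega⟩ ⟨k - 1, by omega⟩ (by simp [Fin.le_def])
  have hsc : (0:ℝ) < Real.sqrt c := Real.sqrt_pos.mpr hc
  have hsL : (0:ℝ) < Real.sqrt L := Real.sqrt_pos.mpr hL
  have hκpos : 0 < κ := by rw [hκ]; exact Real.sqrt_pos.mpr (by positivity)
  have hκval : κ⁻¹ * Real.sqrt c = c / Real.sqrt L := by
    rw [hκ, Real.sqrt_div hL.le, inv_div, div_mul_eq_mul_div, Real.mul_self_sqrt hc.le]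
  have hs0 : 0 ≤ κ⁻¹ * Real.sqrt c := mul_nonneg (inv_nonneg.mpr hκpos.le) (Real.sqrt_nonneg _)
  have hsLs : Real.sqrt L * (κ⁻¹ * Real.sqrt c) = c := by
    rw [hκval]; field_simp
  have hssq : (κ⁻¹ * Real.sqrt c) ^ 2 ≤ c := by
    rw [hκval, div_pow, Real.sq_sqrt hL.le, div_le_iff₀ hL]
    nlinarith
  -- extract a near-optimal orthogonal P
  have hspos : 0 < κ⁻¹ * Real.sqrt c := mul_pos (inv_pos.mpr hκpos) hsc
  obtain ⟨t0, ht0mem, ht0lt⟩ :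
      ∃ t0 ∈ {t : ℝ | ∃ P : Matrix (Fin k) (Fin k) ℝ,
        Pᵀ * P = 1 ∧ t = frob (U - Ustar * P)},
        t0 < 0.21 * (κ⁻¹ * Real.sqrt c) := by
    apply exists_lt_of_csInf_lt
    · refine ⟨frob (U - Ustar * (1 : Matrix (Fin k) (Fin k) ℝ)), ?_⟩
      refine ⟨(1 : Matrix (Fin k) (Fin k) ℝ), ?_, rfl⟩
      rw [transpose_one, mul_one]
    · refine lt_of_le_of_lt hnear ?_
      nlinarith
  obtain ⟨P, hP, ht0⟩ := ht0mem
  have hΔ : frob (U - Ustar * P) ≤ 0.21 * (κ⁻¹ * Real.sqrt c) := by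
    rw [← ht0]; exact ht0lt.le
  have hΔ0 : 0 ≤ frob (U - Ustar * P) := frob_nonneg _
  -- orthonormality of the selected eigenvector block
  have hWkO : (W.submatrix id (Fin.castLE hkr))ᵀ * (W.submatrix id (Fin.castLE hkr)) = 1 := by
    ext a b
    have h1 : ((W.submatrix id (Fin.castLE hkr))ᵀ * (W.submatrix id (Fin.castLE hkr))) a b
        = (Wᵀ * W) (Fin.castLE hkr a) (Fin.castLE hkr b) := by
      simp [Matrix.mul_apply]
    rw [h1, hW]
    by_cases hab : a = b
    · subst hab; simp [Matrix.one_apply]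
    · rw [Matrix.one_apply_ne (fun h => hab ((Fin.castLE_injective hkr) h)),
        Matrix.one_apply_ne hab]
  have hUtU : Ustarᵀ * Ustar = diagonal (fun j : Fin k => lam (Fin.castLE hkr j)) := by
    rw [hUstar, transpose_mul, diagonal_transpose, Matrix.mul_assoc,
      ← Matrix.mul_assoc (W.submatrix id (Fin.castLE hkr))ᵀ, hWkO, Matrix.one_mul,
      diagonal_mul_diagonal]
    have he : (fun j : Fin k => Real.sqrt (lam (Fin.castLE hkr j))
        * Real.sqrt (lam (Fin.castLE hkr j))) = fun j => lam (Fin.castLE hkr j) :=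
      funext fun j => Real.mul_self_sqrt (hpos _).le
    rw [he]
  -- reindexing sums
  have hsum_lt : ∀ F : Fin r → ℝ, (∑ j : Fin r, if (j:ℕ) < k then F j else 0)
      = ∑ j : Fin k, F (Fin.castLE hkr j) := by
    intro F
    rw [← Finset.sum_filter]
    have himg : Finset.univ.filter (fun j : Fin r => (j:ℕ) < k)
        = Finset.univ.image (Fin.castLE hkr) := by
      ext j
      simp only [Finset.mem_filter, Finset.mem_univ, true_and, Finset.mem_image]
      constructor
      · intro hj
        exact ⟨⟨(j:ℕ), hj⟩, rfl⟩
      · rintro ⟨a, -, rfl⟩; simpa using a.isLt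
    rw [himg, Finset.sum_image (fun a _ b _ h => Fin.castLE_injective hkr h)]
  have hUUT : Ustar * Ustarᵀ
      = W * diagonal (fun j : Fin r => if (j:ℕ) < k then lam j else 0) * Wᵀ := by
    ext i i'
    have hR : (W * diagonal (fun j : Fin r => if (j:ℕ) < k then lam j else 0) * Wᵀ) i i'
        = ∑ j : Fin r, (if (j:ℕ) < k then W i j * lam j * W i' j else 0) := by
      rw [Matrix.mul_assoc]
      simp only [Matrix.mul_apply, Matrix.diagonal_apply, Matrix.transpose_apply, ite_mul,
        zero_mul, Finset.sum_ite_eq, Finset.mem_univ, if_true]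
      exact Finset.sum_congr rfl fun j _ => by split <;> ring
    have hUe : ∀ (i0 : Fin N) (j : Fin k),
        Ustar i0 j = W i0 (Fin.castLE hkr j) * Real.sqrt (lam (Fin.castLE hkr j)) := by
      intro i0 j
      rw [hUstar, Matrix.mul_diagonal, Matrix.submatrix_apply]
      rfl
    rw [hR, hsum_lt fun j => W i j * lam j * W i' j, Matrix.mul_apply]
    refine Finset.sum_congr rfl fun j _ => ?_
    rw [Matrix.transpose_apply, hUe, hUe]
    have hss := Real.mul_self_sqrt (hpos (Fin.castLE hkr j)).le
    linear_combination (W i (Fin.castLE hkr j) * W i' (Fin.castLE hkr j)) * hss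
  have hXres : X - Ustar * Ustarᵀ
      = W * diagonal (fun j : Fin r => if (j:ℕ) < k then 0 else lam j) * Wᵀ := by
    rw [hX, hUUT, ← Matrix.sub_mul, ← Matrix.mul_sub, diagonal_sub]
    have he : (fun j : Fin r => lam j - if (j:ℕ) < k then lam j else 0)
        = fun j : Fin r => if (j:ℕ) < k then 0 else lam j := by
      funext j
      split <;> ring
    rw [he]
  -- the residual bound
  have hProj : (1 - W * Wᵀ) * (1 - W * Wᵀ) = 1 - W * Wᵀ := by
    have h2 : W * Wᵀ * (W * Wᵀ) = W * Wᵀ := by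
      calc W * Wᵀ * (W * Wᵀ) = W * ((Wᵀ * W) * Wᵀ) := by
            rw [Matrix.mul_assoc, Matrix.mul_assoc]
        _ = W * Wᵀ := by rw [hW, Matrix.one_mul]
    rw [Matrix.mul_sub, Matrix.sub_mul, Matrix.sub_mul]
    simp only [Matrix.mul_one, Matrix.one_mul]
    rw [h2]
    abel
  have hProjT : (1 - W * Wᵀ)ᵀ = 1 - W * Wᵀ := by
    rw [transpose_sub, transpose_one, transpose_mul, transpose_transpose]
  have hYle : mip (Wᵀ * D) (Wᵀ * D) ≤ frob D ^ 2 := by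
    have hnn := mip_self_nonneg ((1 - W * Wᵀ) * D)
    have hexp : mip ((1 - W * Wᵀ) * D) ((1 - W * Wᵀ) * D)
        = frob D ^ 2 - mip (Wᵀ * D) (Wᵀ * D) := by
      rw [mip_mul_left', hProjT, ← Matrix.mul_assoc, hProj, Matrix.sub_mul, Matrix.one_mul,
        mip_sub_right', Matrix.mul_assoc, mip_comm' D (W * (Wᵀ * D)), mip_mul_left',
        frob_sq]
    linarith
  have claim5 : mip (X - Ustar * Ustarᵀ) (D * Dᵀ) ≤ c / 12 * frob D ^ 2 := by
    rw [hXres]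
    have e1 : mip (W * diagonal (fun j : Fin r => if (j:ℕ) < k then 0 else lam j) * Wᵀ)
          (D * Dᵀ)
        = ∑ j : Fin r, (if (j:ℕ) < k then (0:ℝ) else lam j)
            * ((Wᵀ * D) * (Wᵀ * D)ᵀ) j j := by
      rw [Matrix.mul_assoc, mip_mul_left', mip_mul_right', transpose_transpose]
      have hM : (Wᵀ * (D * Dᵀ)) * W = (Wᵀ * D) * (Wᵀ * D)ᵀ := by
        rw [transpose_mul, transpose_transpose, Matrix.mul_assoc, Matrix.mul_assoc,
          Matrix.mul_assoc]
      rw [hM, mip_diagonal]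
    rw [e1]
    have hqnn : ∀ j, 0 ≤ ((Wᵀ * D) * (Wᵀ * D)ᵀ) j j := by
      intro j
      rw [Matrix.mul_apply]
      exact Finset.sum_nonneg fun a _ => by
        rw [Matrix.transpose_apply]; exact mul_self_nonneg _
    have hgle : ∀ j : Fin r, (if (j:ℕ) < k then (0:ℝ) else lam j) ≤ c / 12 := by
      intro j
      by_cases hj : (j:ℕ) < k
      · simp only [if_pos hj]; positivity
      · simp only [if_neg hj]
        have hkr' : k < r := lt_of_le_of_lt (Nat.le_of_not_lt hj) j.isLt
        have h1 : lam j ≤ lam ⟨k, hkr'⟩ := hdesc ⟨k, hkr'⟩ j (by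
          simp only [Fin.le_def]; omega)
        have h2 := hgap
        rw [dif_pos hkr'] at h2
        exact le_trans h1 h2
    have hsum_le : ∑ j : Fin r, (if (j:ℕ) < k then (0:ℝ) else lam j)
          * ((Wᵀ * D) * (Wᵀ * D)ᵀ) j j
        ≤ ∑ j : Fin r, c / 12 * ((Wᵀ * D) * (Wᵀ * D)ᵀ) j j :=
      Finset.sum_le_sum fun j _ => mul_le_mul_of_nonneg_right (hgle j) (hqnn j)
    have htr : ∑ j, ((Wᵀ * D) * (Wᵀ * D)ᵀ) j j = mip (Wᵀ * D) (Wᵀ * D) := by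
      simp only [mip, Matrix.mul_apply, Matrix.transpose_apply]
    calc ∑ j : Fin r, (if (j:ℕ) < k then (0:ℝ) else lam j) * ((Wᵀ * D) * (Wᵀ * D)ᵀ) j j
        ≤ ∑ j : Fin r, c / 12 * ((Wᵀ * D) * (Wᵀ * D)ᵀ) j j := hsum_le
      _ = c / 12 * mip (Wᵀ * D) (Wᵀ * D) := by rw [← Finset.mul_sum, htr]
      _ ≤ c / 12 * frob D ^ 2 := by
          have : (0:ℝ) ≤ c / 12 := by positivity
          exact mul_le_mul_of_nonneg_left hYle this
  -- notation
  have hPP : P * Pᵀ = 1 := mul_eq_one_comm.mp hP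
  have hVVT : (Ustar * P) * (Ustar * P)ᵀ = Ustar * Ustarᵀ := by
    rw [transpose_mul, ← Matrix.mul_assoc, Matrix.mul_assoc Ustar P Pᵀ, hPP, Matrix.mul_one]
  have hDV : Dᵀ * (Ustar * P) = Uᵀ * D - Dᵀ * (U - Ustar * P) := by
    rw [Matrix.mul_sub, hD]; abel
  -- part 1
  have hpart1 : (1/2) * frob (U * Dᵀ + D * Uᵀ) ^ 2
      = frob (U * Dᵀ) ^ 2 + mip (Uᵀ * D) (Uᵀ * D) := by
    rw [frob_sq, mip_add_left', mip_add_right', mip_add_right']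
    have hAB : mip (U * Dᵀ) (D * Uᵀ) = mip (Uᵀ * D) (Uᵀ * D) := by
      rw [mip_mul_left', ← Matrix.mul_assoc, mip_comm', mip_mul_right',
        transpose_transpose, hD]
    have hBA : mip (D * Uᵀ) (U * Dᵀ) = mip (Uᵀ * D) (Uᵀ * D) := by
      rw [mip_comm']; exact hAB
    have hBB : mip (D * Uᵀ) (D * Uᵀ) = mip (U * Dᵀ) (U * Dᵀ) := by
      have hT : U * Dᵀ = (D * Uᵀ)ᵀ := by rw [transpose_mul, transpose_transpose]
      rw [hT, mip_transpose'', transpose_transpose]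
    rw [hAB, hBA, hBB, frob_sq]
    ring
  -- part 2
  have hpart2 : mip (U * Uᵀ - X) (D * Dᵀ)
      = 2 * mip (Uᵀ * D) (Dᵀ * (U - Ustar * P))
        - mip (Dᵀ * (U - Ustar * P)) (Dᵀ * (U - Ustar * P))
        - mip (X - Ustar * Ustarᵀ) (D * Dᵀ) := by
    have h1 : mip (U * Uᵀ) (D * Dᵀ) = mip (Uᵀ * D) (Uᵀ * D) := by
      rw [mip_cross, hD]
    have h2 : mip (Ustar * Ustarᵀ) (D * Dᵀ)
        = mip (Uᵀ * D - Dᵀ * (U - Ustar * P)) (Uᵀ * D - Dᵀ * (U - Ustar * P)) := by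
      rw [← hVVT, mip_cross, hDV]
    have h3 : mip X (D * Dᵀ) = mip (X - Ustar * Ustarᵀ) (D * Dᵀ)
        + mip (Ustar * Ustarᵀ) (D * Dᵀ) := by
      rw [← mip_add_left']
      congr 1
      abel
    have h4 : mip (Uᵀ * D - Dᵀ * (U - Ustar * P)) (Uᵀ * D - Dᵀ * (U - Ustar * P))
        = mip (Uᵀ * D) (Uᵀ * D) - 2 * mip (Uᵀ * D) (Dᵀ * (U - Ustar * P))
          + mip (Dᵀ * (U - Ustar * P)) (Dᵀ * (U - Ustar * P)) := by
      rw [mip_sub_left', mip_sub_right', mip_sub_right',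
        mip_comm' (Dᵀ * (U - Ustar * P)) (Uᵀ * D)]
      ring
    rw [mip_sub_left', h1, h3, h2, h4]
    ring
  -- quantitative bounds
  have hE : frob (Dᵀ * (U - Ustar * P)) ≤ frob D * (0.21 * (κ⁻¹ * Real.sqrt c)) := by
    calc frob (Dᵀ * (U - Ustar * P)) ≤ frob Dᵀ * frob (U - Ustar * P) := frob_mul_le _ _
      _ = frob D * frob (U - Ustar * P) := by rw [frob_transpose]
      _ ≤ frob D * (0.21 * (κ⁻¹ * Real.sqrt c)) :=
          mul_le_mul_of_nonneg_left hΔ (frob_nonneg _)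
  have hEsq : frob (Dᵀ * (U - Ustar * P)) ^ 2 ≤ 0.0441 * c * frob D ^ 2 := by
    have h1 : frob (Dᵀ * (U - Ustar * P)) ^ 2
        ≤ (frob D * (0.21 * (κ⁻¹ * Real.sqrt c))) ^ 2 :=
      pow_le_pow_left₀ (frob_nonneg _) hE 2
    calc frob (Dᵀ * (U - Ustar * P)) ^ 2
        ≤ (frob D * (0.21 * (κ⁻¹ * Real.sqrt c))) ^ 2 := h1
      _ = 0.0441 * (κ⁻¹ * Real.sqrt c) ^ 2 * frob D ^ 2 := by ring
      _ ≤ 0.0441 * c * frob D ^ 2 := by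
          have h3 := mul_le_mul_of_nonneg_right hssq (sq_nonneg (frob D))
          linarith
  have hcs : -(frob (Uᵀ * D) * frob (Dᵀ * (U - Ustar * P)))
      ≤ mip (Uᵀ * D) (Dᵀ * (U - Ustar * P)) := neg_frob_le_mip _ _
  have hmid : -(0.0882 * c * frob D ^ 2)
      ≤ mip (Uᵀ * D) (Uᵀ * D) + 2 * mip (Uᵀ * D) (Dᵀ * (U - Ustar * P))
        - mip (Dᵀ * (U - Ustar * P)) (Dᵀ * (U - Ustar * P)) := by
    have e1 : mip (Uᵀ * D) (Uᵀ * D) = frob (Uᵀ * D) ^ 2 := (frob_sq _).symm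
    have e2 : mip (Dᵀ * (U - Ustar * P)) (Dᵀ * (U - Ustar * P))
        = frob (Dᵀ * (U - Ustar * P)) ^ 2 := (frob_sq _).symm
    rw [e1, e2]
    nlinarith [sq_nonneg (frob (Uᵀ * D) - frob (Dᵀ * (U - Ustar * P))),
      frob_nonneg (Uᵀ * D), frob_nonneg (Dᵀ * (U - Ustar * P))]
  -- the main positive term
  have hkey : 0.58 * c * frob D ^ 2 ≤ frob (U * Dᵀ) ^ 2 := by
    have hrow : ∀ x : Fin k → ℝ,
        0.58 * c * (∑ j, x j ^ 2) ≤ ∑ i, ((U *ᵥ x) i) ^ 2 := by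
      intro x
      have hX2 : (0:ℝ) ≤ ∑ j, x j ^ 2 := Finset.sum_nonneg fun _ _ => sq_nonneg _
      have hUx : U *ᵥ x = (Ustar * P) *ᵥ x + (U - Ustar * P) *ᵥ x := by
        have he : Ustar * P + (U - Ustar * P) = U := by abel
        rw [← Matrix.add_mulVec, he]
      have hsplit : ∑ i, ((U *ᵥ x) i) ^ 2
          = (∑ i, ((Ustar * P) *ᵥ x) i ^ 2)
            + 2 * (∑ i, ((Ustar * P) *ᵥ x) i * ((U - Ustar * P) *ᵥ x) i)
            + ∑ i, ((U - Ustar * P) *ᵥ x) i ^ 2 := by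
        rw [hUx]
        simp only [Pi.add_apply, add_sq, mul_assoc]
        rw [Finset.sum_add_distrib, Finset.sum_add_distrib, ← Finset.mul_sum]
      have hy : ∑ j, ((P *ᵥ x) j) ^ 2 = ∑ j, x j ^ 2 := sumsq_mulVec_orth P hP x
      have hVquad : ∑ i, ((Ustar * P) *ᵥ x) i ^ 2
          = ∑ j, lam (Fin.castLE hkr j) * ((P *ᵥ x) j * (P *ᵥ x) j) := by
        rw [show (Ustar * P) *ᵥ x = Ustar *ᵥ (P *ᵥ x) from (Matrix.mulVec_mulVec x Ustar P).symm]
        rw [sumsq_mulVec_quadform, hUtU]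
        simp [dotProduct, Matrix.mulVec_diagonal, mul_assoc]
      have hVlb : c * (∑ j, x j ^ 2) ≤ ∑ i, ((Ustar * P) *ᵥ x) i ^ 2 := by
        rw [hVquad, ← hy, Finset.mul_sum]
        refine Finset.sum_le_sum fun j _ => ?_
        have h1 : c ≤ lam (Fin.castLE hkr j) := hdesc (Fin.castLE hkr j) ⟨k - 1, by omega⟩
          (by simp only [Fin.le_def]; have := j.isLt; simp [Fin.castLE]; omega)
        nlinarith [mul_self_nonneg ((P *ᵥ x) j)]
      have hVub : ∑ i, ((Ustar * P) *ᵥ x) i ^ 2 ≤ L * (∑ j, x j ^ 2) := by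
        rw [hVquad, ← hy, Finset.mul_sum]
        refine Finset.sum_le_sum fun j _ => ?_
        have h1 : lam (Fin.castLE hkr j) ≤ L := hdesc ⟨0, by omega⟩ (Fin.castLE hkr j)
          (by simp [Fin.le_def])
        nlinarith [mul_self_nonneg ((P *ᵥ x) j)]
      have hdub : ∑ i, ((U - Ustar * P) *ᵥ x) i ^ 2
          ≤ (0.21 * (κ⁻¹ * Real.sqrt c)) ^ 2 * (∑ j, x j ^ 2) := by
        calc ∑ i, ((U - Ustar * P) *ᵥ x) i ^ 2
            ≤ frob (U - Ustar * P) ^ 2 * ∑ j, x j ^ 2 := sumsq_mulVec_le _ _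
          _ ≤ (0.21 * (κ⁻¹ * Real.sqrt c)) ^ 2 * ∑ j, x j ^ 2 := by
              have := pow_le_pow_left₀ hΔ0 hΔ 2
              exact mul_le_mul_of_nonneg_right this hX2
      have hdnn : (0:ℝ) ≤ ∑ i, ((U - Ustar * P) *ᵥ x) i ^ 2 :=
        Finset.sum_nonneg fun _ _ => sq_nonneg _
      have hvnn : (0:ℝ) ≤ ∑ i, ((Ustar * P) *ᵥ x) i ^ 2 :=
        Finset.sum_nonneg fun _ _ => sq_nonneg _
      -- cross term bound
      have hcross : -(0.21 * c * (∑ j, x j ^ 2))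
          ≤ ∑ i, ((Ustar * P) *ᵥ x) i * ((U - Ustar * P) *ᵥ x) i := by
        have h1 : ∑ i, (-(((Ustar * P) *ᵥ x) i)) * ((U - Ustar * P) *ᵥ x) i
            ≤ Real.sqrt (∑ i, (-(((Ustar * P) *ᵥ x) i)) ^ 2)
              * Real.sqrt (∑ i, ((U - Ustar * P) *ᵥ x) i ^ 2) :=
          Real.sum_mul_le_sqrt_mul_sqrt _ _ _
        simp only [neg_sq, neg_mul, Finset.sum_neg_distrib] at h1
        have h2 : Real.sqrt (∑ i, ((Ustar * P) *ᵥ x) i ^ 2)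
            ≤ Real.sqrt L * Real.sqrt (∑ j, x j ^ 2) := by
          rw [← Real.sqrt_mul hL.le]
          exact Real.sqrt_le_sqrt hVub
        have h3 : Real.sqrt (∑ i, ((U - Ustar * P) *ᵥ x) i ^ 2)
            ≤ 0.21 * (κ⁻¹ * Real.sqrt c) * Real.sqrt (∑ j, x j ^ 2) := by
          have hq : Real.sqrt ((0.21 * (κ⁻¹ * Real.sqrt c)) ^ 2 * (∑ j, x j ^ 2))
              = 0.21 * (κ⁻¹ * Real.sqrt c) * Real.sqrt (∑ j, x j ^ 2) := by
            rw [Real.sqrt_mul (sq_nonneg _), Real.sqrt_sq (by positivity)]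
          calc Real.sqrt (∑ i, ((U - Ustar * P) *ᵥ x) i ^ 2)
              ≤ Real.sqrt ((0.21 * (κ⁻¹ * Real.sqrt c)) ^ 2 * (∑ j, x j ^ 2)) :=
                Real.sqrt_le_sqrt hdub
            _ = 0.21 * (κ⁻¹ * Real.sqrt c) * Real.sqrt (∑ j, x j ^ 2) := hq
        have h4 : Real.sqrt (∑ i, ((Ustar * P) *ᵥ x) i ^ 2)
              * Real.sqrt (∑ i, ((U - Ustar * P) *ᵥ x) i ^ 2)
            ≤ (Real.sqrt L * Real.sqrt (∑ j, x j ^ 2))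
              * (0.21 * (κ⁻¹ * Real.sqrt c) * Real.sqrt (∑ j, x j ^ 2)) :=
          mul_le_mul h2 h3 (Real.sqrt_nonneg _) (by positivity)
        have h5 : (Real.sqrt L * Real.sqrt (∑ j, x j ^ 2))
              * (0.21 * (κ⁻¹ * Real.sqrt c) * Real.sqrt (∑ j, x j ^ 2))
            = 0.21 * (Real.sqrt L * (κ⁻¹ * Real.sqrt c)) * (Real.sqrt (∑ j, x j ^ 2)) ^ 2 := by
          ring
        rw [h5, hsLs, Real.sq_sqrt hX2] at h4
        linarith
      rw [hsplit]
      linarith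
    -- assemble over rows of D
    have hfd : frob D ^ 2 = ∑ i, ∑ j, D i j ^ 2 :=
      Real.sq_sqrt (Finset.sum_nonneg fun _ _ => Finset.sum_nonneg fun _ _ => sq_nonneg _)
    have hfud : frob (U * Dᵀ) ^ 2 = ∑ i : Fin N, ∑ n : Fin N, ((U *ᵥ D i) n) ^ 2 := by
      rw [show frob (U * Dᵀ) ^ 2 = ∑ n, ∑ i, ((U * Dᵀ) n i) ^ 2 from
        Real.sq_sqrt (Finset.sum_nonneg fun _ _ => Finset.sum_nonneg fun _ _ => sq_nonneg _)]
      rw [Finset.sum_comm]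
      exact Finset.sum_congr rfl fun i _ => Finset.sum_congr rfl fun n _ => by
        simp [Matrix.mul_apply, Matrix.mulVec, dotProduct]
    rw [hfd, hfud, Finset.mul_sum]
    exact Finset.sum_le_sum fun i _ => hrow (D i)
  -- final assembly
  have hfd2 : (0:ℝ) ≤ frob D ^ 2 := sq_nonneg _
  rw [hpart1, hpart2]
  nlinarith [hkey, hmid, claim5, mul_nonneg hc.le hfd2]
end
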